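/- arXiv:1801.08782 — 3 statements merged into one kernel-verified Lean document; each statement's English description precedes it below -/
import Mathlib

section
/- Let Γ be a tetravalent G-half-arc-transitive graph for some G ≤ Aut(Γ), let a = att_G(Γ) and let Q_G(Γ) = {q_t, q_h}. Then gcd(a, q_t) = gcd(a, q_h) = 1 and q_t q_h ≡ ±1 (mod a). -/
/-! Common definitions for tetravalent half-arc-transitive graph theory. -/

open SimpleGraph Set

namespace HalfArc

variable {V W : Type*}

/-- A subgroup of automorphisms acts transitively on the vertices. -/
def IsVertexTrans (Γ : SimpleGraph V) (G : Subgroup (Γ ≃g Γ)) : Prop :=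
  ∀ u v : V, ∃ g ∈ G, g u = v

/-- A subgroup of automorphisms acts transitively on the edges. -/
def IsEdgeTrans (Γ : SimpleGraph V) (G : Subgroup (Γ ≃g Γ)) : Prop :=
  ∀ ⦃u v u' v' : V⦄, Γ.Adj u v → Γ.Adj u' v' →
    ∃ g ∈ G, (g u = u' ∧ g v = v') ∨ (g u = v' ∧ g v = u')

/-- A subgroup of automorphisms acts transitively on the arcs (ordered pairs of
adjacent vertices). -/
def IsArcTrans (Γ : SimpleGraph V) (G : Subgroup (Γ ≃g Γ)) : Prop :=
  ∀ ⦃u v u' v' : V⦄, Γ.Adj u v → Γ.Adj u' v' → ∃ g ∈ G, g u = u' ∧ g v = v'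

/-- Half-arc-transitive: vertex- and edge- but not arc-transitive. -/
def IsHalfArcTrans (Γ : SimpleGraph V) (G : Subgroup (Γ ≃g Γ)) : Prop :=
  IsVertexTrans Γ G ∧ IsEdgeTrans Γ G ∧ ¬ IsArcTrans Γ G

/-- An alternating cycle of length `n` in a graph `Γ` whose edges carry an
orientation `O`: a cyclic sequence of pairwise distinct vertices in which
consecutive vertices are adjacent and any two consecutive edges have opposite
orientations. -/
structure AltCycle (Γ : SimpleGraph V) (O : V → V → Prop) (n : ℕ) where
  f : ZMod n → V
  inj : Function.Injective f
  adj : ∀ i, Γ.Adj (f i) (f (i + 1))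
  alt : ∀ i, O (f i) (f (i + 1)) ↔ O (f (i + 2)) (f (i + 1))

/-- The vertex set of an alternating cycle. -/
def cycVerts {Γ : SimpleGraph V} {O : V → V → Prop} {n : ℕ} (c : AltCycle Γ O n) : Set V :=
  Set.range c.f

/-- The edge set of an alternating cycle. -/
def cycEdges {Γ : SimpleGraph V} {O : V → V → Prop} {n : ℕ} (c : AltCycle Γ O n) :
    Set (Sym2 V) :=
  Set.range fun i => s(c.f i, c.f (i + 1))

/-- The sets of edges of alternating cycles (an alternating cycle, as a subgraph,
is determined by its edge set). -/
def IsAltEdgeSet (Γ : SimpleGraph V) (O : V → V → Prop) (n : ℕ) (E : Set (Sym2 V)) : Prop :=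
  ∃ c : AltCycle Γ O n, cycEdges c = E

/-- The vertex sets of alternating cycles. -/
def IsAltVertSet (Γ : SimpleGraph V) (O : V → V → Prop) (n : ℕ) (A : Set V) : Prop :=
  ∃ c : AltCycle Γ O n, cycVerts c = A

/-- The set of vertices covered by a set of edges. -/
def suppOf (E : Set (Sym2 V)) : Set V := {v | ∃ e ∈ E, v ∈ e}

/-- The graph of alternating cycles: its vertices are the alternating cycles
(represented by their edge sets), two of them adjacent whenever they share a vertex. -/
def altGraph (Γ : SimpleGraph V) (O : V → V → Prop) (n : ℕ) :
    SimpleGraph {E : Set (Sym2 V) // IsAltEdgeSet Γ O n E} where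
  Adj X Y := X ≠ Y ∧ (suppOf X.1 ∩ suppOf Y.1).Nonempty
  symm := by
    constructor
    rintro X Y ⟨hne, x, hx1, hx2⟩
    exact ⟨hne.symm, x, hx2, hx1⟩
  loopless := by constructor; rintro X ⟨hne, -⟩; exact hne rfl

/-- The attachment sets: nonempty intersections of (the vertex sets of) two distinct
alternating cycles. -/
def IsAttSet (Γ : SimpleGraph V) (O : V → V → Prop) (n : ℕ) (A : Set V) : Prop :=
  ∃ c c' : AltCycle Γ O n, cycEdges c ≠ cycEdges c' ∧ (cycVerts c ∩ cycVerts c').Nonempty ∧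
    A = cycVerts c ∩ cycVerts c'

/-- `attachmentIs Γ O n a` : any two distinct alternating cycles with nonempty
intersection meet in exactly `a` vertices. -/
def attachmentIs (Γ : SimpleGraph V) (O : V → V → Prop) (n a : ℕ) : Prop :=
  ∀ A : Set V, IsAttSet Γ O n A → A.ncard = a

/-- A `k`-step rotation of an alternating cycle (in one of the two directions). -/
def IsRot {Γ : SimpleGraph V} {O : V → V → Prop} {n : ℕ} (c : AltCycle Γ O n)
    (g : V → V) (k : ℕ) : Prop :=
  (∀ i, g (c.f i) = c.f (i + k)) ∨ (∀ i, g (c.f i) = c.f (i - k))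

/-- The setup of the paper: a finite connected tetravalent graph `Γ`, a subgroup `G`
of its automorphism group acting half-arc-transitively, one of the two `G`-induced
orientations `O` of the edges of `Γ` (an orbit of `G` on arcs), the `G`-radius `r`
(half the common length of all `G`-alternating cycles) and the `G`-attachment
number `att`, together with the basic structural facts relating them. -/
structure Setup (V : Type*) where
  Γ : SimpleGraph V
  finite : Finite V
  conn : Γ.Connected
  tetra : ∀ v : V, (Γ.neighborSet v).ncard = 4
  G : Subgroup (Γ ≃g Γ)
  hat : IsHalfArcTrans Γ G
  O : V → V → Prop
  O_adj : ∀ ⦃u v⦄, O u v → Γ.Adj u v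
  O_choice : ∀ ⦃u v⦄, Γ.Adj u v → (O u v ↔ ¬ O v u)
  O_inv : ∀ g ∈ G, ∀ ⦃u v⦄, O u v → O (g u) (g v)
  O_orbit : ∀ ⦃u v u' v'⦄, O u v → O u' v' → ∃ g ∈ G, g u = u' ∧ g v = v'
  r : ℕ
  r_pos : 0 < r
  /-- every vertex lies on exactly two `G`-alternating cycles, each of length `2 * r` -/
  alt_cover : ∀ v : V, {E : Set (Sym2 V) | IsAltEdgeSet Γ O (2 * r) E ∧ v ∈ suppOf E}.ncard = 2
  att : ℕ
  att_pos : 0 < att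
  /-- any two non-disjoint `G`-alternating cycles meet in exactly `att` vertices -/
  att_eq : attachmentIs Γ O (2 * r) att
  att_dvd : att ∣ 2 * r

namespace Setup

variable {V : Type*} (S : Setup V)

/-- The kernel of the action of `G` on the set of `G`-alternating cycles:
the elements of `G` fixing every `G`-alternating cycle setwise. -/
def altKernel : Subgroup (S.Γ ≃g S.Γ) where
  carrier := {g | g ∈ S.G ∧ ∀ E : Set (Sym2 V),
    IsAltEdgeSet S.Γ S.O (2 * S.r) E → Sym2.map (g : V → V) '' E = E}
  one_mem' := by
    refine ⟨S.G.one_mem, fun E _ => ?_⟩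
    have : Sym2.map ((1 : S.Γ ≃g S.Γ) : V → V) = id := by
      funext e
      have : ((1 : S.Γ ≃g S.Γ) : V → V) = id := rfl
      rw [this, Sym2.map_id, id]
    rw [this, Set.image_id]
  mul_mem' := by
    rintro g h ⟨hg, hg'⟩ ⟨hh, hh'⟩
    refine ⟨S.G.mul_mem hg hh, fun E hE => ?_⟩
    have hcomp : Sym2.map ((g * h : S.Γ ≃g S.Γ) : V → V)
        = Sym2.map (g : V → V) ∘ Sym2.map (h : V → V) := by
      funext e
      have : ((g * h : S.Γ ≃g S.Γ) : V → V) = (g : V → V) ∘ (h : V → V) := rfl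
      rw [this, Function.comp_apply, ← Sym2.map_map]
    rw [hcomp, Set.image_comp, hh' E hE, hg' E hE]
  inv_mem' := by
    rintro g ⟨hg, hg'⟩
    refine ⟨S.G.inv_mem hg, fun E hE => ?_⟩
    conv_lhs => rw [← hg' E hE]
    rw [← Set.image_comp]
    have : Sym2.map ((g⁻¹ : S.Γ ≃g S.Γ) : V → V) ∘ Sym2.map (g : V → V) = id := by
      funext e
      rw [Function.comp_apply, Sym2.map_map]
      have h1 : ((g⁻¹ : S.Γ ≃g S.Γ) : V → V) ∘ (g : V → V) = id := by
        funext v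
        exact g.toEquiv.symm_apply_apply v
      rw [h1, Sym2.map_id]
    rw [this, Set.image_id]

/-- The kernel of the action of `G` on a collection of sets of vertices. -/
def kernelOn (P : Set V → Prop) : Subgroup (S.Γ ≃g S.Γ) where
  carrier := {g | g ∈ S.G ∧ ∀ A : Set V, P A → (g : V → V) '' A = A}
  one_mem' := ⟨S.G.one_mem, fun A _ => by
    have : ((1 : S.Γ ≃g S.Γ) : V → V) = id := rfl
    rw [this, Set.image_id]⟩
  mul_mem' := by
    rintro g h ⟨hg, hg'⟩ ⟨hh, hh'⟩
    refine ⟨S.G.mul_mem hg hh, fun A hA => ?_⟩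
    have : ((g * h : S.Γ ≃g S.Γ) : V → V) = (g : V → V) ∘ (h : V → V) := rfl
    rw [this, Set.image_comp, hh' A hA, hg' A hA]
  inv_mem' := by
    rintro g ⟨hg, hg'⟩
    refine ⟨S.G.inv_mem hg, fun A hA => ?_⟩
    conv_lhs => rw [← hg' A hA]
    rw [← Set.image_comp]
    have : ((g⁻¹ : S.Γ ≃g S.Γ) : V → V) ∘ (g : V → V) = id := by
      funext v; exact g.toEquiv.symm_apply_apply v
    rw [this, Set.image_id]

/-- The kernel of the action of `G` on the set of all `G`-attachment sets. -/
def attKernel : Subgroup (S.Γ ≃g S.Γ) :=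
  S.kernelOn (IsAttSet S.Γ S.O (2 * S.r))

/-- The block `B_s(C; u_i) = {u_{i+2sj} : 0 ≤ j < att}` of Construction 5.3. -/
def blockSet (s : ℕ) (c : AltCycle S.Γ S.O (2 * S.r)) (i : ZMod (2 * S.r)) : Set V :=
  {v | ∃ j : ℕ, j < S.att ∧ v = c.f (i + (2 * s * j : ℕ))}

/-- The imprimitivity block system `B` of Construction 5.3. -/
def Blocks (s : ℕ) : Set (Set V) :=
  {A | ∃ (c : AltCycle S.Γ S.O (2 * S.r)) (i : ZMod (2 * S.r)), A = S.blockSet s c i}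

/-- The quotient graph `Γ_B` of `Γ` with respect to the block system `B`. -/
def quotGraph (s : ℕ) : SimpleGraph {A : Set V // A ∈ S.Blocks s} where
  Adj X Y := X ≠ Y ∧ ∃ u ∈ X.1, ∃ v ∈ Y.1, S.Γ.Adj u v
  symm := by
    constructor
    rintro X Y ⟨hne, u, hu, v, hv, ha⟩
    exact ⟨hne.symm, v, hv, u, hu, ha.symm⟩
  loopless := by constructor; rintro X ⟨hne, -⟩; exact hne rfl

/-- The kernel of the action of `G` on the quotient graph `Γ_B`. -/
def quotKernel (s : ℕ) : Subgroup (S.Γ ≃g S.Γ) :=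
  S.kernelOn (· ∈ S.Blocks s)

/-- The orientation of the edges of the quotient graph `Γ_B` induced by `O`. -/
def quotO (s : ℕ) (X Y : {A : Set V // A ∈ S.Blocks s}) : Prop :=
  ∃ u ∈ X.1, ∃ v ∈ Y.1, S.O u v

end Setup

/-- The data defining the parameters `q_t` and `q_h` of Section 3: a vertex `v`,
the two `G`-alternating cycles `c` and `c'` through `v` (with `v = u_0 = v_0` and
`v` the tail of the two arcs of `c` incident to it), and the minimality properties
defining `q_t` and `q_h`.  Here `ell = 2r/att`. -/
structure JumpData {V : Type*} (S : Setup V) where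
  v : V
  c : AltCycle S.Γ S.O (2 * S.r)
  c' : AltCycle S.Γ S.O (2 * S.r)
  ell : ℕ
  hell : S.att * ell = 2 * S.r
  hc : c.f 0 = v
  hc' : c'.f 0 = v
  hne : cycEdges c ≠ cycEdges c'
  htail₁ : S.O v (c.f 1)
  htail₂ : S.O v (c.f (-1))
  qt : ℕ
  qh : ℕ
  hqt : c'.f ((qt * ell : ℕ)) = c.f ((ell : ℕ)) ∨
    c'.f ((qt * ell : ℕ)) = c.f (-(ell : ZMod (2 * S.r)))
  hqt_min : ∀ m : ℕ, m < qt → ¬(c'.f ((m * ell : ℕ)) = c.f ((ell : ℕ)) ∨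
    c'.f ((m * ell : ℕ)) = c.f (-(ell : ZMod (2 * S.r))))
  hqh : c.f ((qh * ell : ℕ)) = c'.f ((ell : ℕ)) ∨
    c.f ((qh * ell : ℕ)) = c'.f (-(ell : ZMod (2 * S.r)))
  hqh_min : ∀ m : ℕ, m < qh → ¬(c.f ((m * ell : ℕ)) = c'.f ((ell : ℕ)) ∨
    c.f ((m * ell : ℕ)) = c'.f (-(ell : ZMod (2 * S.r))))

/-- The `G`-alternating jump `jum_G(Γ) = min {q_t, q_h}`. -/
def JumpData.jump {V : Type*} {S : Setup V} (J : JumpData S) : ℕ := min J.qt J.qh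

end HalfArc


open HalfArc
namespace HalfArcAux

open HalfArc Set

variable {V : Type*} {S : Setup V}

lemma nz (S : Setup V) : NeZero (2 * S.r) := ⟨by have := S.r_pos; omega⟩

lemma O_asymm {u v : V} (h : S.O u v) : ¬ S.O v u := (S.O_choice (S.O_adj h)).mp h

lemma O_total {u v : V} (h : S.Γ.Adj u v) : S.O u v ∨ S.O v u := by
  by_cases h1 : S.O u v
  · exact Or.inl h1
  · by_contra h2
    push_neg at h2
    exact h1 ((S.O_choice h).mpr h2.2)

lemma O_map {g : S.Γ ≃g S.Γ} (hg : g ∈ S.G) {u v : V} : S.O u v ↔ S.O (g u) (g v) := by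
  refine ⟨fun h => S.O_inv g hg h, fun h => ?_⟩
  have h2 := S.O_inv g⁻¹ (S.G.inv_mem hg) h
  have e1 : (g⁻¹ : S.Γ ≃g S.Γ) (g u) = u := g.toEquiv.symm_apply_apply u
  have e2 : (g⁻¹ : S.Γ ≃g S.Γ) (g v) = v := g.toEquiv.symm_apply_apply v
  rwa [e1, e2] at h2

lemma mem_pair_resolve {α : Type*} {s : Set α} (hs : s.Finite) (h2 : s.ncard = 2)
    {x z w : α} (hx : x ∈ s) (hz : z ∈ s) (hxz : x ≠ z) (hw : w ∈ s) (hwx : w ≠ x) : w = z := by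
  have hsub : ({x, z} : Set α) ⊆ s := by
    intro y hy; rcases hy with rfl | rfl
    · exact hx
    · exact hz
  have heq := Set.eq_of_subset_of_ncard_le hsub (by rw [h2, Set.ncard_pair hxz]) hs
  rw [← heq] at hw
  rcases hw with rfl | rfl
  · exact absurd rfl hwx
  · rfl

/-- `fwd c i` : the `i`-th edge of the cycle is oriented forwards. -/
def fwd (S : Setup V) (c : AltCycle S.Γ S.O (2 * S.r)) (i : ZMod (2 * S.r)) : Prop :=
  S.O (c.f i) (c.f (i + 1))

lemma fwd_succ (c : AltCycle S.Γ S.O (2 * S.r)) (i : ZMod (2 * S.r)) :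
    fwd S c (i + 1) ↔ ¬ fwd S c i := by
  have halt := c.alt i
  have hxor := S.O_choice (c.adj (i + 1))
  have e : i + 1 + 1 = i + 2 := by ring
  unfold fwd
  rw [e] at hxor ⊢
  rw [hxor]
  exact not_iff_not.mpr halt.symm

lemma fwd_nat (c : AltCycle S.Γ S.O (2 * S.r)) (k : ℕ) :
    fwd S c (k : ZMod (2 * S.r)) ↔ (Even k ↔ fwd S c 0) := by
  induction k with
  | zero => simp
  | succ k ih =>
    have e : ((k + 1 : ℕ) : ZMod (2 * S.r)) = (k : ZMod (2 * S.r)) + 1 := by push_cast; ring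
    rw [e, fwd_succ, ih, Nat.even_add_one]
    tauto

lemma fwd_iff (c : AltCycle S.Γ S.O (2 * S.r)) (i : ZMod (2 * S.r)) :
    fwd S c i ↔ (Even i.val ↔ fwd S c 0) := by
  haveI := nz S
  have := fwd_nat c i.val
  rwa [ZMod.natCast_rightInverse i] at this

end HalfArcAux
namespace HalfArcAux
open HalfArc Set
variable {V : Type*} {S : Setup V}

/-- The reversed alternating cycle. -/
def revC (c : AltCycle S.Γ S.O (2 * S.r)) : AltCycle S.Γ S.O (2 * S.r) where
  f := fun i => c.f (-i)
  inj := fun i j h => by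
    have := c.inj h
    exact neg_injective this
  adj := fun i => by
    show S.Γ.Adj (c.f (-i)) (c.f (-(i + 1)))
    have h := (c.adj (-i - 1)).symm
    have e : -i - 1 + 1 = -i := by ring
    rw [e] at h
    have e2 : -(i + 1) = -i - 1 := by ring
    rw [e2]
    exact h
  alt := fun i => by
    show S.O (c.f (-i)) (c.f (-(i+1))) ↔ S.O (c.f (-(i+2))) (c.f (-(i+1)))
    have h := c.alt (-i - 2)
    have e1 : -i - 2 + 1 = -(i + 1) := by ring
    have e2 : -i - 2 + 2 = -i := by ring
    rw [e1, e2] at h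
    have e3 : -(i + 2) = -i - 2 := by ring
    rw [e3]
    exact h.symm

lemma revC_f (c : AltCycle S.Γ S.O (2 * S.r)) (i : ZMod (2 * S.r)) :
    (revC c).f i = c.f (-i) := rfl

lemma edge_mem (c : AltCycle S.Γ S.O (2 * S.r)) (i : ZMod (2 * S.r)) :
    s(c.f i, c.f (i + 1)) ∈ cycEdges c := ⟨i, rfl⟩

lemma cycEdges_revC (c : AltCycle S.Γ S.O (2 * S.r)) : cycEdges (revC c) = cycEdges c := by
  ext e
  constructor
  · rintro ⟨i, rfl⟩
    show s((revC c).f i, (revC c).f (i + 1)) ∈ cycEdges c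
    have : s((revC c).f i, (revC c).f (i + 1)) = s(c.f (-i - 1), c.f (-i - 1 + 1)) := by
      rw [revC_f, revC_f]
      have e1 : -(i + 1) = -i - 1 := by ring
      have e2 : -i - 1 + 1 = -i := by ring
      rw [e1, e2, Sym2.eq_swap]
    rw [this]
    exact edge_mem c _
  · rintro ⟨i, rfl⟩
    refine ⟨-i - 1, ?_⟩
    show s((revC c).f (-i-1), (revC c).f (-i-1 + 1)) = s(c.f i, c.f (i+1))
    rw [revC_f, revC_f]
    have e1 : -(-i - 1) = i + 1 := by ring
    have e2 : -(-i - 1 + 1) = i := by ring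
    rw [e1, e2, Sym2.eq_swap]

lemma cycVerts_revC (c : AltCycle S.Γ S.O (2 * S.r)) : cycVerts (revC c) = cycVerts c := by
  ext w
  constructor
  · rintro ⟨i, rfl⟩; exact ⟨-i, rfl⟩
  · rintro ⟨i, rfl⟩; exact ⟨-i, by rw [revC_f, neg_neg]⟩

lemma nbr_in_cycle {c : AltCycle S.Γ S.O (2 * S.r)} {m : ZMod (2 * S.r)} {x : V}
    (h : s(c.f m, x) ∈ cycEdges c) : x = c.f (m + 1) ∨ x = c.f (m - 1) := by
  obtain ⟨i, hi⟩ := h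
  rw [Sym2.eq_iff] at hi
  rcases hi with ⟨h1, h2⟩ | ⟨h1, h2⟩
  · left; rw [← h2, c.inj h1]
  · right; rw [← h1]
    have h3 : i = m - 1 := by
      have h4 := c.inj h2
      rw [← h4]; ring
    rw [h3]

/-- Membership of a vertex of a cycle in the support of its edges. -/
lemma mem_supp_of_mem_verts {c : AltCycle S.Γ S.O (2 * S.r)} {w : V}
    (h : w ∈ cycVerts c) : w ∈ suppOf (cycEdges c) := by
  obtain ⟨i, rfl⟩ := h
  exact ⟨s(c.f i, c.f (i + 1)), edge_mem c i, Sym2.mem_mk_left _ _⟩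

/-- The pushforward of an alternating cycle along an automorphism in `G`. -/
def pushC {g : S.Γ ≃g S.Γ} (hg : g ∈ S.G) (c : AltCycle S.Γ S.O (2 * S.r)) :
    AltCycle S.Γ S.O (2 * S.r) where
  f := fun i => g (c.f i)
  inj := fun i j h => c.inj (g.toEquiv.injective h)
  adj := fun i => g.map_rel_iff.mpr (c.adj i)
  alt := fun i => by
    rw [← O_map hg, ← O_map hg]
    exact c.alt i

lemma cycEdges_pushC {g : S.Γ ≃g S.Γ} (hg : g ∈ S.G) (c : AltCycle S.Γ S.O (2 * S.r)) :
    cycEdges (pushC hg c) = Sym2.map (g : V → V) '' cycEdges c := by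
  ext e
  constructor
  · rintro ⟨i, rfl⟩
    exact ⟨s(c.f i, c.f (i + 1)), edge_mem c i, by rw [Sym2.map_pair_eq]; rfl⟩
  · rintro ⟨e', ⟨i, rfl⟩, rfl⟩
    exact ⟨i, by rw [Sym2.map_pair_eq]; rfl⟩

lemma isAlt_image {g : S.Γ ≃g S.Γ} (hg : g ∈ S.G) (c : AltCycle S.Γ S.O (2 * S.r)) :
    IsAltEdgeSet S.Γ S.O (2 * S.r) (Sym2.map (g : V → V) '' cycEdges c) :=
  ⟨pushC hg c, cycEdges_pushC hg c⟩

lemma image_inv {g : S.Γ ≃g S.Γ} {E F : Set (Sym2 V)}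
    (h : Sym2.map (g : V → V) '' E = F) : Sym2.map ((g⁻¹ : S.Γ ≃g S.Γ) : V → V) '' F = E := by
  rw [← h, ← Set.image_comp]
  have hcomp : Sym2.map ((g⁻¹ : S.Γ ≃g S.Γ) : V → V) ∘ Sym2.map (g : V → V) = id := by
    funext e
    rw [Function.comp_apply, Sym2.map_map]
    have h1 : ((g⁻¹ : S.Γ ≃g S.Γ) : V → V) ∘ (g : V → V) = id := by
      funext v; exact g.toEquiv.symm_apply_apply v
    rw [h1, Sym2.map_id]
  rw [hcomp, Set.image_id]

/-- If `g` maps the edge set of `c₁` onto that of `c₂` then it maps vertices to vertices. -/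
lemma verts_map {g : S.Γ ≃g S.Γ} {c₁ c₂ : AltCycle S.Γ S.O (2 * S.r)}
    (h : Sym2.map (g : V → V) '' cycEdges c₁ = cycEdges c₂) {w : V}
    (hw : w ∈ cycVerts c₁) : g w ∈ cycVerts c₂ := by
  obtain ⟨i, rfl⟩ := hw
  have hmem : Sym2.map (g : V → V) s(c₁.f i, c₁.f (i + 1)) ∈ cycEdges c₂ := by
    rw [← h]; exact ⟨_, edge_mem c₁ i, rfl⟩
  rw [Sym2.map_pair_eq] at hmem
  obtain ⟨j, hj⟩ := hmem
  rw [Sym2.eq_iff] at hj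
  rcases hj with ⟨h1, _⟩ | ⟨_, h2⟩
  · exact ⟨j, h1⟩
  · exact ⟨j + 1, h2⟩

end HalfArcAux
namespace HalfArcAux
open HalfArc Set
variable {V : Type*} {S : Setup V}

lemma image_inO {g : S.Γ ≃g S.Γ} (hg : g ∈ S.G) (w : V) :
    (g : V → V) '' {x | S.O x w} = {x | S.O x (g w)} := by
  ext y
  constructor
  · rintro ⟨x, hx, rfl⟩
    exact S.O_inv g hg hx
  · intro hy
    refine ⟨(g⁻¹ : S.Γ ≃g S.Γ) y, ?_, g.toEquiv.apply_symm_apply y⟩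
    have h2 := S.O_inv g⁻¹ (S.G.inv_mem hg) hy
    have e : (g⁻¹ : S.Γ ≃g S.Γ) (g w) = w := g.toEquiv.symm_apply_apply w
    rwa [e] at h2

lemma image_outO {g : S.Γ ≃g S.Γ} (hg : g ∈ S.G) (w : V) :
    (g : V → V) '' {x | S.O w x} = {x | S.O (g w) x} := by
  ext y
  constructor
  · rintro ⟨x, hx, rfl⟩
    exact S.O_inv g hg hx
  · intro hy
    refine ⟨(g⁻¹ : S.Γ ≃g S.Γ) y, ?_, g.toEquiv.apply_symm_apply y⟩
    have h2 := S.O_inv g⁻¹ (S.G.inv_mem hg) hy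
    have e : (g⁻¹ : S.Γ ≃g S.Γ) (g w) = w := g.toEquiv.symm_apply_apply w
    rwa [e] at h2

lemma degs (J : JumpData S) (h2 : ((2 : ℕ) : ZMod (2 * S.r)) ≠ 0) (w : V) :
    {x | S.O x w}.ncard = 2 ∧ {x | S.O w x}.ncard = 2 := by
  haveI := S.finite
  -- ncard of in/out sets is constant over vertices
  have hconst : ∀ u u' : V, {x | S.O x u}.ncard = {x | S.O x u'}.ncard ∧
      {x | S.O u x}.ncard = {x | S.O u' x}.ncard := by
    intro u u'
    obtain ⟨g, hg, rfl⟩ := S.hat.1 u u'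
    constructor
    · rw [← image_inO hg, Set.ncard_image_of_injective _ g.injective]
    · rw [← image_outO hg, Set.ncard_image_of_injective _ g.injective]
  have hone : (1 : ZMod (2 * S.r)) ≠ -1 := by
    intro h
    apply h2
    push_cast
    linear_combination h
  have hzt : (0 : ZMod (2 * S.r)) ≠ 2 := by
    intro h
    apply h2
    push_cast
    linear_combination -h
  -- out-degree of v is at least two
  have hv1 : J.c.f 1 ≠ J.c.f (-1) := fun h => hone (J.c.inj h)
  have hout2 : 2 ≤ {x | S.O J.v x}.ncard := by
    have hsub : ({J.c.f 1, J.c.f (-1)} : Set V) ⊆ {x | S.O J.v x} := by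
      intro y hy; rcases hy with rfl | rfl
      · exact J.htail₁
      · exact J.htail₂
    calc 2 = ({J.c.f 1, J.c.f (-1)} : Set V).ncard := (Set.ncard_pair hv1).symm
    _ ≤ _ := Set.ncard_le_ncard hsub (Set.toFinite _)
  -- in-degree of c.f 1 is at least two
  have h01 : S.O (J.c.f 0) (J.c.f 1) := by rw [J.hc]; exact J.htail₁
  have h21 : S.O (J.c.f 2) (J.c.f 1) := by
    have := (J.c.alt 0).mp (by simpa using h01)
    simpa using this
  have hv2 : J.c.f 0 ≠ J.c.f 2 := fun h => hzt (J.c.inj h)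
  have hin2 : 2 ≤ {x | S.O x (J.c.f 1)}.ncard := by
    have hsub : ({J.c.f 0, J.c.f 2} : Set V) ⊆ {x | S.O x (J.c.f 1)} := by
      intro y hy; rcases hy with rfl | rfl
      · exact h01
      · exact h21
    calc 2 = ({J.c.f 0, J.c.f 2} : Set V).ncard := (Set.ncard_pair hv2).symm
    _ ≤ _ := Set.ncard_le_ncard hsub (Set.toFinite _)
  -- all vertices have in- and out-degree ≥ 2
  have hin : 2 ≤ {x | S.O x w}.ncard := by rw [(hconst w (J.c.f 1)).1]; exact hin2
  have hout : 2 ≤ {x | S.O w x}.ncard := by rw [(hconst w J.v).2]; exact hout2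
  -- the union is contained in the neighbor set
  have hdisj : Disjoint {x | S.O x w} {x | S.O w x} := by
    rw [Set.disjoint_left]
    intro x hx hx'
    exact O_asymm hx' hx
  have hsub : {x | S.O x w} ∪ {x | S.O w x} ⊆ S.Γ.neighborSet w := by
    intro x hx
    rcases hx with hx | hx
    · exact (S.O_adj hx).symm
    · exact S.O_adj hx
  have hle := Set.ncard_le_ncard hsub (Set.toFinite _)
  rw [Set.ncard_union_eq hdisj (Set.toFinite _) (Set.toFinite _), S.tetra w] at hle
  omega
end HalfArcAux
namespace HalfArcAux
open HalfArc Set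
variable {V : Type*} {S : Setup V}

/-- Core rigidity: an element of `G` matching one (oriented) edge of `c` with an edge of `d`
matches the whole cycles. -/
lemma transfer (hdeg : ∀ w : V, {x | S.O x w}.ncard = 2 ∧ {x | S.O w x}.ncard = 2)
    (h2 : ((2 : ℕ) : ZMod (2 * S.r)) ≠ 0)
    {c d : AltCycle S.Γ S.O (2 * S.r)} {g : S.Γ ≃g S.Γ} (hg : g ∈ S.G)
    {i p : ZMod (2 * S.r)} (h0 : g (c.f i) = d.f p) (h1 : g (c.f (i + 1)) = d.f (p + 1)) :
    ∀ j : ZMod (2 * S.r), g (c.f (i + j)) = d.f (p + j) := by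
  haveI := S.finite
  haveI := nz S
  have hne2 : ∀ q : ZMod (2 * S.r), q ≠ q + 2 := by
    intro q h
    apply h2
    push_cast
    linear_combination -h
  have key : ∀ k : ℕ, g (c.f (i + (k : ZMod (2 * S.r)))) = d.f (p + (k : ZMod (2 * S.r))) ∧
      g (c.f (i + (k : ZMod (2 * S.r)) + 1)) = d.f (p + (k : ZMod (2 * S.r)) + 1) := by
    intro k
    induction k with
    | zero => simpa using ⟨h0, h1⟩
    | succ k ih =>
      obtain ⟨ihx, ihy⟩ := ih
      have ec : ∀ q : ZMod (2 * S.r), q + ((k + 1 : ℕ) : ZMod (2 * S.r)) = q + (k : ZMod (2 * S.r)) + 1 := by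
        intro q; push_cast; ring
      have enew : g (c.f (i + (k : ZMod (2 * S.r)) + 2)) = d.f (p + (k : ZMod (2 * S.r)) + 2) := by
        set I := i + (k : ZMod (2 * S.r)) with hI
        set P := p + (k : ZMod (2 * S.r)) with hP
        have halt := c.alt I
        have halt' := d.alt P
        have hOcd : S.O (c.f I) (c.f (I + 1)) ↔ S.O (d.f P) (d.f (P + 1)) := by
          rw [O_map hg (u := c.f I) (v := c.f (I + 1)), ihx, ihy]
        have hadj2 : S.Γ.Adj (c.f (I + 1)) (c.f (I + 2)) := by
          have := c.adj (I + 1)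
          have e : I + 1 + 1 = I + 2 := by ring
          rwa [e] at this
        have hadj2' : S.Γ.Adj (d.f (P + 1)) (d.f (P + 2)) := by
          have := d.adj (P + 1)
          have e : P + 1 + 1 = P + 2 := by ring
          rwa [e] at this
        have hcc : c.f I ≠ c.f (I + 2) := fun h => hne2 I (c.inj h)
        have hdd : d.f P ≠ d.f (P + 2) := fun h => hne2 P (d.inj h)
        have hgz : g (c.f I) = d.f P := ihx
        rcases O_total (c.adj I) with hxy | hyx
        · -- the `I`-th edge points forwards
          have hz : S.O (c.f (I + 2)) (c.f (I + 1)) := halt.mp hxy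
          have hZ : S.O (d.f (P + 2)) (d.f (P + 1)) := halt'.mp (hOcd.mp hxy)
          have hXY : S.O (d.f P) (d.f (P + 1)) := hOcd.mp hxy
          have hwmem : S.O (g (c.f (I + 2))) (d.f (P + 1)) := by
            rw [← ihy]
            exact (O_map hg).mp hz
          refine mem_pair_resolve (s := {x | S.O x (d.f (P + 1))}) (Set.toFinite _)
            (hdeg (d.f (P + 1))).1 hXY hZ hdd hwmem ?_
          intro h
          rw [← hgz] at h
          exact hcc (g.injective h.symm)
        · -- the `I`-th edge points backwards
          have hnxy : ¬ S.O (c.f I) (c.f (I + 1)) := O_asymm hyx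
          have hnz : ¬ S.O (c.f (I + 2)) (c.f (I + 1)) := fun h => hnxy (halt.mpr h)
          have hz : S.O (c.f (I + 1)) (c.f (I + 2)) := by
            rcases O_total hadj2 with h | h
            · exact h
            · exact absurd h hnz
          have hYX : S.O (d.f (P + 1)) (d.f P) := by
            rw [← ihx, ← ihy]
            exact (O_map hg).mp hyx
          have hnXY : ¬ S.O (d.f P) (d.f (P + 1)) := O_asymm hYX
          have hZ : S.O (d.f (P + 1)) (d.f (P + 2)) := by
            rcases O_total hadj2' with h | h
            · exact h
            · exact absurd h (fun hh => hnXY (halt'.mpr hh)) 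
          have hwmem : S.O (d.f (P + 1)) (g (c.f (I + 2))) := by
            rw [← ihy]
            exact (O_map hg).mp hz
          refine mem_pair_resolve (s := {x | S.O (d.f (P + 1)) x}) (Set.toFinite _)
            (hdeg (d.f (P + 1))).2 hYX hZ hdd hwmem ?_
          intro h
          rw [← hgz] at h
          exact hcc (g.injective h.symm)
      constructor
      · rw [ec, ec]
        exact ihy
      · rw [ec, ec]
        have e : ∀ q : ZMod (2 * S.r), q + (k : ZMod (2 * S.r)) + 1 + 1 = q + (k : ZMod (2 * S.r)) + 2 := by
          intro q; ring
        rw [e, e]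
        exact enew
  intro j
  have := (key j.val).1
  rwa [ZMod.natCast_rightInverse j] at this

end HalfArcAux
namespace HalfArcAux
open HalfArc Set
variable {V : Type*} {S : Setup V}

lemma constr (hdeg : ∀ w : V, {x | S.O x w}.ncard = 2 ∧ {x | S.O w x}.ncard = 2)
    (h2 : ((2 : ℕ) : ZMod (2 * S.r)) ≠ 0) {c d : AltCycle S.Γ S.O (2 * S.r)}
    (hc0 : S.O (c.f 0) (c.f 1)) {m : ZMod (2 * S.r)} (hd : S.O (d.f m) (d.f (m + 1))) :
    ∃ g ∈ S.G, ∀ j, g (c.f j) = d.f (m + j) := by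
  obtain ⟨g, hg, hg0, hg1⟩ := S.O_orbit hc0 hd
  have h1 : g (c.f (0 + 1)) = d.f (m + 1) := by rwa [zero_add]
  have := transfer hdeg h2 hg (i := 0) (p := m) hg0 h1
  exact ⟨g, hg, fun j => by have h := this j; rwa [zero_add] at h⟩

lemma classify (hdeg : ∀ w : V, {x | S.O x w}.ncard = 2 ∧ {x | S.O w x}.ncard = 2)
    (h2 : ((2 : ℕ) : ZMod (2 * S.r)) ≠ 0) {c d : AltCycle S.Γ S.O (2 * S.r)}
    {g : S.Γ ≃g S.Γ} (hg : g ∈ S.G)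
    (hE : Sym2.map (g : V → V) '' cycEdges c = cycEdges d) {p : ZMod (2 * S.r)}
    (hp : g (c.f 0) = d.f p) :
    (∀ j, g (c.f j) = d.f (p + j)) ∨ (∀ j, g (c.f j) = d.f (p - j)) := by
  have he0 : s(c.f 0, c.f 1) ∈ cycEdges c := by
    have := edge_mem c 0
    rwa [zero_add] at this
  have hmem : s(g (c.f 0), g (c.f 1)) ∈ cycEdges d := by
    rw [← hE]
    exact ⟨s(c.f 0, c.f 1), he0, Sym2.map_pair_eq _ _ _⟩
  rw [hp] at hmem
  rcases nbr_in_cycle hmem with h1 | h1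
  · left
    have h1' : g (c.f (0 + 1)) = d.f (p + 1) := by rwa [zero_add]
    have := transfer hdeg h2 hg (i := 0) (p := p) hp h1'
    intro j
    have h := this j
    rwa [zero_add] at h
  · right
    have hp' : g (c.f 0) = (revC d).f (-p) := by rw [revC_f, neg_neg]; exact hp
    have h1' : g (c.f (0 + 1)) = (revC d).f (-p + 1) := by
      rw [zero_add, revC_f]
      have e : -(-p + 1) = p - 1 := by ring
      rw [e]
      exact h1
    have := transfer hdeg h2 hg hp' h1'
    intro j
    have h := this j
    rw [zero_add, revC_f] at h
    have e : -(-p + j) = p - j := by ring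
    rwa [e] at h

lemma edges_eq_of_pointwise {c d : AltCycle S.Γ S.O (2 * S.r)} {i j : ZMod (2 * S.r)}
    (h : ∀ k, c.f (i + k) = d.f (j + k)) : cycEdges c = cycEdges d := by
  ext e
  constructor
  · rintro ⟨m, rfl⟩
    refine ⟨j + (m - i), ?_⟩
    show s(d.f (j + (m - i)), d.f (j + (m - i) + 1)) = s(c.f m, c.f (m + 1))
    have e1 : c.f m = d.f (j + (m - i)) := by
      have := h (m - i)
      rwa [show i + (m - i) = m by ring] at this
    have e2 : c.f (m + 1) = d.f (j + (m - i) + 1) := by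
      have := h (m - i + 1)
      rwa [show i + (m - i + 1) = m + 1 by ring, show j + (m - i + 1) = j + (m - i) + 1 by ring] at this
    rw [← e1, ← e2]
  · rintro ⟨m, rfl⟩
    refine ⟨i + (m - j), ?_⟩
    show s(c.f (i + (m - j)), c.f (i + (m - j) + 1)) = s(d.f m, d.f (m + 1))
    have e1 : c.f (i + (m - j)) = d.f m := by
      have := h (m - j)
      rwa [show j + (m - j) = m by ring] at this
    have e2 : c.f (i + (m - j) + 1) = d.f (m + 1) := by
      have := h (m - j + 1)
      rwa [show i + (m - j + 1) = i + (m - j) + 1 by ring, show j + (m - j + 1) = m + 1 by ring] at this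
    rw [e1, e2]

lemma ident_transfer (hdeg : ∀ w : V, {x | S.O x w}.ncard = 2 ∧ {x | S.O w x}.ncard = 2)
    (h2 : ((2 : ℕ) : ZMod (2 * S.r)) ≠ 0) {c d : AltCycle S.Γ S.O (2 * S.r)}
    {i j : ZMod (2 * S.r)} (h0 : c.f i = d.f j) (h1 : c.f (i + 1) = d.f (j + 1)) :
    ∀ k, c.f (i + k) = d.f (j + k) := by
  have e1 : (1 : S.Γ ≃g S.Γ) (c.f i) = d.f j := h0
  have e2 : (1 : S.Γ ≃g S.Γ) (c.f (i + 1)) = d.f (j + 1) := h1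
  have := transfer hdeg h2 (S.G.one_mem) e1 e2
  exact fun k => this k

lemma edges_eq_of_shared (hdeg : ∀ w : V, {x | S.O x w}.ncard = 2 ∧ {x | S.O w x}.ncard = 2)
    (h2 : ((2 : ℕ) : ZMod (2 * S.r)) ≠ 0) {c d : AltCycle S.Γ S.O (2 * S.r)}
    {e : Sym2 V} (hc : e ∈ cycEdges c) (hd : e ∈ cycEdges d) : cycEdges c = cycEdges d := by
  obtain ⟨i, rfl⟩ := hc
  obtain ⟨j, hj⟩ := hd
  rw [Sym2.eq_iff] at hj
  rcases hj with ⟨ha, hb⟩ | ⟨ha, hb⟩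
  · exact edges_eq_of_pointwise (ident_transfer hdeg h2 ha.symm hb.symm)
  · have ha' : c.f i = (revC d).f (-(j + 1)) := by rw [revC_f, neg_neg]; exact hb.symm
    have hb' : c.f (i + 1) = (revC d).f (-(j + 1) + 1) := by
      rw [revC_f, show -(-(j + 1) + 1) = j by ring]
      exact ha.symm
    have := edges_eq_of_pointwise (ident_transfer hdeg h2 ha' hb')
    rwa [cycEdges_revC] at this

lemma cover_pair {c₁ c₂ : AltCycle S.Γ S.O (2 * S.r)} {w : V}
    (hw1 : w ∈ cycVerts c₁) (hw2 : w ∈ cycVerts c₂) (hne : cycEdges c₁ ≠ cycEdges c₂)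
    {E : Set (Sym2 V)} (hE : IsAltEdgeSet S.Γ S.O (2 * S.r) E) (hwE : w ∈ suppOf E)
    (hEne : E ≠ cycEdges c₁) : E = cycEdges c₂ := by
  haveI := S.finite
  exact mem_pair_resolve (Set.toFinite _) (S.alt_cover w)
    (⟨⟨c₁, rfl⟩, mem_supp_of_mem_verts hw1⟩ :
      cycEdges c₁ ∈ {E | IsAltEdgeSet S.Γ S.O (2 * S.r) E ∧ w ∈ suppOf E})
    ⟨⟨c₂, rfl⟩, mem_supp_of_mem_verts hw2⟩ hne ⟨hE, hwE⟩ hEne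

lemma tail_flip (J : JumpData S)
    (hdeg : ∀ w : V, {x | S.O x w}.ncard = 2 ∧ {x | S.O w x}.ncard = 2)
    (h2 : ((2 : ℕ) : ZMod (2 * S.r)) ≠ 0) {x y : ZMod (2 * S.r)}
    (hxy : J.c.f x = J.c'.f y) : fwd S J.c x ↔ ¬ fwd S J.c' y := by
  haveI := S.finite
  have hnotsh : ∀ e ∈ cycEdges J.c, e ∉ cycEdges J.c' :=
    fun e he he' => J.hne (edges_eq_of_shared hdeg h2 he he')
  have hne2 : ∀ q : ZMod (2 * S.r), q - 1 ≠ q + 1 := by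
    intro q h
    apply h2
    push_cast
    linear_combination -h
  constructor
  · intro hf hf'
    -- `w` is a tail on both cycles: contradiction via out-degree 2
    have hout1 : S.O (J.c.f x) (J.c.f (x + 1)) := hf
    have hout2 : S.O (J.c.f x) (J.c.f (x - 1)) := by
      have hnb : ¬ S.O (J.c.f (x - 1)) (J.c.f x) := by
        have h3 := fwd_succ J.c (x - 1)
        rw [show x - 1 + 1 = x by ring] at h3
        have h4 := h3.mp hf
        unfold fwd at h4
        rwa [show x - 1 + 1 = x by ring] at h4
      rcases O_total ((J.c.adj (x - 1)).symm) with h | h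
      · rwa [show x - 1 + 1 = x by ring] at h
      · rw [show x - 1 + 1 = x by ring] at h
        exact absurd h hnb
    have hdist : J.c.f (x - 1) ≠ J.c.f (x + 1) := fun h => hne2 x (J.c.inj h)
    have hmem : S.O (J.c.f x) (J.c'.f (y + 1)) := by rw [hxy]; exact hf'
    have hres := mem_pair_resolve (s := {z | S.O (J.c.f x) z}) (Set.toFinite _)
      (hdeg (J.c.f x)).2 hout2 hout1 hdist hmem
    by_cases hcase : J.c'.f (y + 1) = J.c.f (x - 1)
    · -- shared edge s(c.f x, c.f (x-1))
      refine hnotsh s(J.c.f (x - 1), J.c.f x) ?_ ?_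
      · have := edge_mem J.c (x - 1)
        rwa [show x - 1 + 1 = x by ring] at this
      · rw [← hcase, hxy, Sym2.eq_swap]
        exact edge_mem J.c' y
    · have := hres hcase
      refine hnotsh s(J.c.f x, J.c.f (x + 1)) (edge_mem J.c x) ?_
      rw [← this, hxy]
      exact edge_mem J.c' y
  · intro hn'
    by_contra hnf
    -- `w` is a head on both cycles: contradiction via in-degree 2
    have hin1 : S.O (J.c.f (x + 1)) (J.c.f x) := by
      rcases O_total (J.c.adj x) with h | h
      · exact absurd h hnf
      · exact h
    have hin2 : S.O (J.c.f (x - 1)) (J.c.f x) := by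
      have h3 := fwd_succ J.c (x - 1)
      rw [show x - 1 + 1 = x by ring] at h3
      have hb : fwd S J.c (x - 1) := by
        by_contra hc
        exact hnf (h3.mpr hc)
      unfold fwd at hb
      rwa [show x - 1 + 1 = x by ring] at hb
    have hdist : J.c.f (x - 1) ≠ J.c.f (x + 1) := fun h => hne2 x (J.c.inj h)
    have hmem : S.O (J.c'.f (y + 1)) (J.c.f x) := by
      rw [hxy]
      rcases O_total (J.c'.adj y) with h | h
      · exact absurd h hn'
      · exact h
    have hres := mem_pair_resolve (s := {z | S.O z (J.c.f x)}) (Set.toFinite _)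
      (hdeg (J.c.f x)).1 hin2 hin1 hdist hmem
    by_cases hcase : J.c'.f (y + 1) = J.c.f (x - 1)
    · refine hnotsh s(J.c.f (x - 1), J.c.f x) ?_ ?_
      · have := edge_mem J.c (x - 1)
        rwa [show x - 1 + 1 = x by ring] at this
      · rw [← hcase, hxy, Sym2.eq_swap]
        exact edge_mem J.c' y
    · have := hres hcase
      refine hnotsh s(J.c.f x, J.c.f (x + 1)) (edge_mem J.c x) ?_
      rw [← this, hxy]
      exact edge_mem J.c' y

end HalfArcAux
namespace HalfArcAux
open HalfArc Set
variable {V : Type*} {S : Setup V}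

lemma map_edges_rot {g : S.Γ ≃g S.Γ} {c d : AltCycle S.Γ S.O (2 * S.r)} {p : ZMod (2 * S.r)}
    (h : ∀ j, g (c.f j) = d.f (p + j)) :
    Sym2.map (g : V → V) '' cycEdges c = cycEdges d := by
  ext e
  constructor
  · rintro ⟨e', ⟨i, rfl⟩, rfl⟩
    refine ⟨p + i, ?_⟩
    show s(d.f (p + i), d.f (p + i + 1)) = Sym2.map (g : V → V) s(c.f i, c.f (i + 1))
    rw [Sym2.map_pair_eq, h i, h (i + 1), show p + (i + 1) = p + i + 1 by ring]
  · rintro ⟨m, rfl⟩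
    refine ⟨s(c.f (m - p), c.f (m - p + 1)), edge_mem c (m - p), ?_⟩
    rw [Sym2.map_pair_eq, h (m - p), h (m - p + 1),
      show p + (m - p) = m by ring, show p + (m - p + 1) = m + 1 by ring]

lemma map_edges_refl {g : S.Γ ≃g S.Γ} {c d : AltCycle S.Γ S.O (2 * S.r)} {p : ZMod (2 * S.r)}
    (h : ∀ j, g (c.f j) = d.f (p - j)) :
    Sym2.map (g : V → V) '' cycEdges c = cycEdges d := by
  ext e
  constructor
  · rintro ⟨e', ⟨i, rfl⟩, rfl⟩
    refine ⟨p - i - 1, ?_⟩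
    show s(d.f (p - i - 1), d.f (p - i - 1 + 1)) = Sym2.map (g : V → V) s(c.f i, c.f (i + 1))
    rw [Sym2.map_pair_eq, h i, h (i + 1), show p - (i + 1) = p - i - 1 by ring,
      show p - i - 1 + 1 = p - i by ring, Sym2.eq_swap]
  · rintro ⟨m, rfl⟩
    refine ⟨s(c.f (p - m - 1), c.f (p - m - 1 + 1)), edge_mem c (p - m - 1), ?_⟩
    rw [Sym2.map_pair_eq, h (p - m - 1), h (p - m - 1 + 1),
      show p - (p - m - 1) = m + 1 by ring, show p - (p - m - 1 + 1) = m by ring, Sym2.eq_swap]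

lemma mem_supp_image {g : S.Γ ≃g S.Γ} {c : AltCycle S.Γ S.O (2 * S.r)} {w : V}
    (hw : w ∈ cycVerts c) :
    (g : V → V) w ∈ suppOf (Sym2.map (g : V → V) '' cycEdges c) := by
  obtain ⟨i, rfl⟩ := hw
  refine ⟨Sym2.map (g : V → V) s(c.f i, c.f (i + 1)), ⟨_, edge_mem c i, rfl⟩, ?_⟩
  rw [Sym2.map_pair_eq]
  exact Sym2.mem_mk_left _ _

/-- Rotations of `c` through an attachment vertex fix `c'` (as an edge set). -/
lemma rot_exists (J : JumpData S)
    (hdeg : ∀ w : V, {x | S.O x w}.ncard = 2 ∧ {x | S.O w x}.ncard = 2)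
    (h2 : ((2 : ℕ) : ZMod (2 * S.r)) ≠ 0) {t : ZMod (2 * S.r)}
    (hf : S.O (J.c.f t) (J.c.f (t + 1))) (hmem : J.c.f t ∈ cycVerts J.c') :
    ∃ g ∈ S.G, (∀ j, g (J.c.f j) = J.c.f (t + j)) ∧
      Sym2.map (g : V → V) '' cycEdges J.c' = cycEdges J.c' := by
  have hc0 : S.O (J.c.f 0) (J.c.f 1) := by rw [J.hc]; exact J.htail₁
  obtain ⟨g, hg, hgj⟩ := constr hdeg h2 hc0 hf
  refine ⟨g, hg, hgj, ?_⟩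
  have hEc : Sym2.map (g : V → V) '' cycEdges J.c = cycEdges J.c := map_edges_rot hgj
  have hvmem : J.v ∈ cycVerts J.c' := ⟨0, J.hc'⟩
  have hgv : g J.v = J.c.f t := by
    have := hgj 0
    rw [J.hc, add_zero] at this
    exact this
  refine cover_pair (c₁ := J.c) (c₂ := J.c') ⟨t, rfl⟩ hmem J.hne
    (isAlt_image hg J.c') ?_ ?_
  · rw [← hgv]
    exact mem_supp_image hvmem
  · intro h
    have hA := image_inv h
    have hB := image_inv hEc
    exact J.hne (hB.symm.trans hA)

/-- Swaps: elements carrying `c` onto `c'` through a tail of `c'` lying on `c`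
carry `c'` back onto `c`. -/
lemma swap_exists (J : JumpData S)
    (hdeg : ∀ w : V, {x | S.O x w}.ncard = 2 ∧ {x | S.O w x}.ncard = 2)
    (h2 : ((2 : ℕ) : ZMod (2 * S.r)) ≠ 0) {k : ZMod (2 * S.r)}
    (hf : S.O (J.c'.f k) (J.c'.f (k + 1))) (hmem : J.c'.f k ∈ cycVerts J.c) :
    ∃ g ∈ S.G, (∀ j, g (J.c.f j) = J.c'.f (k + j)) ∧
      Sym2.map (g : V → V) '' cycEdges J.c' = cycEdges J.c := by
  have hc0 : S.O (J.c.f 0) (J.c.f 1) := by rw [J.hc]; exact J.htail₁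
  obtain ⟨g, hg, hgj⟩ := constr hdeg h2 hc0 hf
  refine ⟨g, hg, hgj, ?_⟩
  have hEc : Sym2.map (g : V → V) '' cycEdges J.c = cycEdges J.c' := map_edges_rot hgj
  have hvmem : J.v ∈ cycVerts J.c' := ⟨0, J.hc'⟩
  have hgv : g J.v = J.c'.f k := by
    have := hgj 0
    rw [J.hc, add_zero] at this
    exact this
  refine cover_pair (c₁ := J.c') (c₂ := J.c) ⟨k, rfl⟩ hmem (Ne.symm J.hne)
    (isAlt_image hg J.c') ?_ ?_
  · rw [← hgv]
    exact mem_supp_image hvmem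
  · intro h
    have hA := image_inv h
    have hB := image_inv hEc
    exact J.hne (hB.symm.trans hA)

end HalfArcAux
namespace HalfArcAux
open HalfArc Set
variable {V : Type*}

lemma odd_cast_two {m : ℕ} (h : Odd m) : ((m : ℕ) : ZMod 2) = 1 := by
  rw [← ZMod.natCast_mod m 2, Nat.odd_iff.mp h, Nat.cast_one]

lemma odd_cast_four {m : ℕ} (h : Odd m) : ((m : ℕ) : ZMod 4) = 1 ∨ ((m : ℕ) : ZMod 4) = -1 := by
  have h4 : m % 4 = 1 ∨ m % 4 = 3 := by
    have := Nat.odd_iff.mp h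
    omega
  rw [← ZMod.natCast_mod m 4]
  rcases h4 with h' | h'
  · left; rw [h', Nat.cast_one]
  · right; rw [h']; decide

lemma key (S : Setup V) (J : JumpData S) :
    ((J.qt * J.qh : ℕ) : ZMod S.att) = 1 ∨ ((J.qt * J.qh : ℕ) : ZMod S.att) = -1 := by
  haveI := S.finite
  haveI := nz S
  have ha := S.att_pos
  have hr := S.r_pos
  have hal := J.hell
  have hl : 0 < J.ell := by
    by_contra h
    push_neg at h
    have h0 : J.ell = 0 := by omega
    rw [h0, mul_zero] at hal
    omega
  by_cases h1 : S.att = 1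
  · left
    haveI : Subsingleton (ZMod S.att) := by rw [h1]; exact inferInstance
    exact Subsingleton.elim _ _
  have ha2 : 2 ≤ S.att := by omega
  have hlltN : J.ell < 2 * S.r := by nlinarith
  have hl0 : ((J.ell : ℕ) : ZMod (2 * S.r)) ≠ 0 := by
    intro h
    rw [ZMod.natCast_eq_zero_iff] at h
    exact absurd (Nat.le_of_dvd hl h) (by omega)
  obtain ⟨e1, he1, he1or⟩ : ∃ e : ZMod (2 * S.r),
      J.c'.f ((J.qt * J.ell : ℕ)) = J.c.f e ∧
      (e = ((J.ell : ℕ) : ZMod (2 * S.r)) ∨ e = -((J.ell : ℕ) : ZMod (2 * S.r))) := by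
    rcases J.hqt with h | h
    exacts [⟨_, h, Or.inl rfl⟩, ⟨_, h, Or.inr rfl⟩]
  obtain ⟨e2, he2, he2or⟩ : ∃ e : ZMod (2 * S.r),
      J.c.f ((J.qh * J.ell : ℕ)) = J.c'.f e ∧
      (e = ((J.ell : ℕ) : ZMod (2 * S.r)) ∨ e = -((J.ell : ℕ) : ZMod (2 * S.r))) := by
    rcases J.hqh with h | h
    exacts [⟨_, h, Or.inl rfl⟩, ⟨_, h, Or.inr rfl⟩]
  have hN0 : ((S.att : ℕ) : ZMod (2 * S.r)) * ((J.ell : ℕ) : ZMod (2 * S.r)) = 0 := by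
    have h3 : ((S.att * J.ell : ℕ) : ZMod (2 * S.r)) = 0 := by
      rw [hal]; exact ZMod.natCast_self _
    push_cast at h3
    exact h3
  have hcancel : ∀ x y : ℕ,
      ((x * J.ell : ℕ) : ZMod (2 * S.r)) = ((y * J.ell : ℕ) : ZMod (2 * S.r)) →
      ((x : ZMod S.att) = (y : ZMod S.att)) := by
    intro x y h
    rw [ZMod.natCast_eq_natCast_iff] at h ⊢
    rw [← hal] at h
    exact Nat.ModEq.mul_right_cancel' (by omega) h
  have hfin : ∀ x : ℕ,
      (((x * J.ell : ℕ) : ZMod (2 * S.r)) = ((J.ell : ℕ) : ZMod (2 * S.r)) ∨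
        ((x * J.ell : ℕ) : ZMod (2 * S.r)) = -((J.ell : ℕ) : ZMod (2 * S.r))) →
      ((x : ZMod S.att) = 1 ∨ (x : ZMod S.att) = -1) := by
    intro x hx
    rcases hx with hx | hx
    · left
      have h := hcancel x 1 (by rw [hx]; push_cast; ring)
      simpa using h
    · right
      have hy : (((S.att - 1) * J.ell : ℕ) : ZMod (2 * S.r)) = -((J.ell : ℕ) : ZMod (2 * S.r)) := by
        push_cast [Nat.cast_sub (by omega : 1 ≤ S.att)]
        linear_combination hN0
      have h := hcancel x (S.att - 1) (by rw [hx, ← hy])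
      rw [h]
      push_cast [Nat.cast_sub (by omega : 1 ≤ S.att)]
      rw [ZMod.natCast_self]
      ring
  -- the attachment-number-two case
  by_cases h2a : S.att = 2
  · have hqt_odd : Odd J.qt := by
      rcases Nat.even_or_odd J.qt with hev | hodd
      · exfalso
        obtain ⟨s, hs⟩ := hev
        have hz : ((J.qt * J.ell : ℕ) : ZMod (2 * S.r)) = 0 := by
          rw [ZMod.natCast_eq_zero_iff, ← hal, h2a]
          exact ⟨s, by rw [hs]; ring⟩
        rw [hz] at he1
        have h0 : J.c.f 0 = J.c.f e1 := by rw [J.hc, ← J.hc']; exact he1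
        have hz2 := J.c.inj h0
        rcases he1or with h' | h'
        · exact hl0 (by rw [← h']; exact hz2.symm)
        · refine hl0 (neg_eq_zero.mp ?_)
          rw [← h']
          exact hz2.symm
      · exact hodd
    have hqh_odd : Odd J.qh := by
      rcases Nat.even_or_odd J.qh with hev | hodd
      · exfalso
        obtain ⟨s, hs⟩ := hev
        have hz : ((J.qh * J.ell : ℕ) : ZMod (2 * S.r)) = 0 := by
          rw [ZMod.natCast_eq_zero_iff, ← hal, h2a]
          exact ⟨s, by rw [hs]; ring⟩
        rw [hz] at he2
        have h0 : J.c'.f 0 = J.c'.f e2 := by rw [J.hc', ← J.hc]; exact he2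
        have hz2 := J.c'.inj h0
        rcases he2or with h' | h'
        · exact hl0 (by rw [← h']; exact hz2.symm)
        · refine hl0 (neg_eq_zero.mp ?_)
          rw [← h']
          exact hz2.symm
      · exact hodd
    left
    rw [h2a]
    exact odd_cast_two (Nat.odd_mul.mpr ⟨hqt_odd, hqh_odd⟩)
  have ha3 : 3 ≤ S.att := by omega
  have h2 : ((2 : ℕ) : ZMod (2 * S.r)) ≠ 0 := by
    intro h
    rw [ZMod.natCast_eq_zero_iff] at h
    have := Nat.le_of_dvd (by norm_num) h
    nlinarith
  have hdeg : ∀ w : V, {x | S.O x w}.ncard = 2 ∧ {x | S.O w x}.ncard = 2 := degs J h2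
  have h2l0 : ((2 * J.ell : ℕ) : ZMod (2 * S.r)) ≠ 0 := by
    intro hzz
    rw [ZMod.natCast_eq_zero_iff, ← hal] at hzz
    have h4 : S.att ∣ 2 := (Nat.mul_dvd_mul_iff_right hl).mp hzz
    have := Nat.le_of_dvd (by norm_num) h4
    omega
  -- `qt`, `qh` are reduced mod the attachment number
  have hshift : ∀ q : ℕ, S.att ≤ q →
      (((q - S.att) * J.ell : ℕ) : ZMod (2 * S.r)) = ((q * J.ell : ℕ) : ZMod (2 * S.r)) := by
    intro q hq
    have e0 : (q - S.att) * J.ell + S.att * J.ell = q * J.ell := by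
      rw [← Nat.add_mul, Nat.sub_add_cancel hq]
    have hz : ((S.att * J.ell : ℕ) : ZMod (2 * S.r)) = 0 := by
      rw [hal]; exact ZMod.natCast_self _
    calc (((q - S.att) * J.ell : ℕ) : ZMod (2 * S.r))
        = (((q - S.att) * J.ell : ℕ) : ZMod (2 * S.r)) + ((S.att * J.ell : ℕ) : ZMod (2 * S.r)) := by
          rw [hz, add_zero]
      _ = (((q - S.att) * J.ell + S.att * J.ell : ℕ) : ZMod (2 * S.r)) := (Nat.cast_add _ _).symm
      _ = _ := by rw [e0]
  have hqtlt : J.qt < S.att := by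
    by_contra hc
    push_neg at hc
    exact J.hqt_min (J.qt - S.att) (by omega) (by rw [hshift J.qt hc]; exact J.hqt)
  have hqhlt : J.qh < S.att := by
    by_contra hc
    push_neg at hc
    exact J.hqh_min (J.qh - S.att) (by omega) (by rw [hshift J.qh hc]; exact J.hqh)
  -- the reflection θ
  have hc0 : S.O (J.c.f 0) (J.c.f 1) := by rw [J.hc]; exact J.htail₁
  have hdm : S.O ((revC J.c).f 0) ((revC J.c).f (0 + 1)) := by
    have h9 : S.O (J.c.f 0) (J.c.f (-1)) := by rw [J.hc]; exact J.htail₂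
    simpa [revC_f] using h9
  obtain ⟨θ, hθG, hθj⟩ := constr hdeg h2 hc0 hdm
  have hθc : ∀ j, θ (J.c.f j) = J.c.f (-j) := fun j => by
    have := hθj j
    rwa [zero_add, revC_f] at this
  have hθv : θ J.v = J.v := by
    have h9 := hθc 0
    rw [neg_zero, J.hc] at h9
    exact h9
  have hθEc : Sym2.map (θ : V → V) '' cycEdges J.c = cycEdges J.c :=
    map_edges_refl (p := 0) (fun j => by rw [hθc j, zero_sub])
  have hθEc' : Sym2.map (θ : V → V) '' cycEdges J.c' = cycEdges J.c' := by
    refine cover_pair (c₁ := J.c) (c₂ := J.c') ⟨0, J.hc⟩ ⟨0, J.hc'⟩ J.hne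
      (isAlt_image hθG J.c') ?_ ?_
    · have := mem_supp_image (g := θ) (⟨0, J.hc'⟩ : J.v ∈ cycVerts J.c')
      rwa [hθv] at this
    · intro h
      have hA := image_inv h
      have hB := image_inv hθEc
      exact J.hne (hB.symm.trans hA)
  have hθp : θ (J.c'.f 0) = J.c'.f 0 := by rw [J.hc']; exact hθv
  have hθc' : ∀ j, θ (J.c'.f j) = J.c'.f (-j) := by
    rcases classify hdeg h2 hθG hθEc' hθp with hrot | hrefl
    · exfalso
      have h1' := hrot (((J.qt * J.ell : ℕ)) : ZMod (2 * S.r))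
      rw [zero_add, he1, hθc e1] at h1'
      have hee := J.c.inj h1'
      have h2l : ((2 * J.ell : ℕ) : ZMod (2 * S.r)) = 0 := by
        rcases he1or with h' | h'
        · rw [h'] at hee; push_cast; linear_combination -hee
        · rw [h'] at hee; push_cast at hee ⊢; linear_combination hee
      exact h2l0 h2l
    · intro j
      have := hrefl j
      rwa [zero_sub] at this
  -- parity bookkeeping
  have hval : ∀ k : ℕ, Even ((k : ZMod (2 * S.r))).val ↔ Even k := by
    intro k
    rw [ZMod.val_natCast, Nat.even_iff, Nat.even_iff, Nat.mod_mod_of_dvd k (dvd_mul_right 2 S.r)]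
  have hfwd0 : fwd S J.c 0 := by
    show S.O (J.c.f 0) (J.c.f (0 + 1))
    rw [zero_add]
    exact hc0
  have hfwdc : ∀ i, fwd S J.c i ↔ Even i.val := by
    intro i
    rw [fwd_iff]
    constructor
    · intro h; by_contra hc; exact (not_iff_not.mpr h).mp (by tauto) hfwd0
    · intro h; tauto
  have hnfwd0 : ¬ fwd S J.c' 0 :=
    (tail_flip J hdeg h2 (x := 0) (y := 0) (by rw [J.hc, J.hc'])).mp hfwd0
  have hfwdc' : ∀ i, fwd S J.c' i ↔ ¬ Even i.val := by
    intro i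
    rw [fwd_iff]
    constructor
    · intro h hc
      exact hnfwd0 (h.mp hc)
    · intro h
      constructor
      · intro hev; exact absurd hev h
      · intro hf; exact absurd hf hnfwd0
  have hpar : ∀ x y : ZMod (2 * S.r), J.c.f x = J.c'.f y → (Even x.val ↔ Even y.val) := by
    intro x y hxy
    have := tail_flip J hdeg h2 hxy
    rw [hfwdc, hfwdc'] at this
    tauto
  have hnegrep : ∀ m : ℕ, m ≤ 2 * S.r →
      ((2 * S.r - m : ℕ) : ZMod (2 * S.r)) = -((m : ℕ) : ZMod (2 * S.r)) := by
    intro m hm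
    rw [Nat.cast_sub hm, ZMod.natCast_self, zero_sub]
  rcases Nat.even_or_odd J.ell with hle | hlo
  · -- ====================== ℓ even ======================
    obtain ⟨E1n, hE1cast, hE1ev⟩ : ∃ m : ℕ, ((m : ℕ) : ZMod (2 * S.r)) = e1 ∧ Even m := by
      rcases he1or with h' | h'
      · exact ⟨J.ell, h'.symm, hle⟩
      · refine ⟨2 * S.r - J.ell, ?_, ?_⟩
        · rw [h', hnegrep J.ell hlltN.le]
        · rw [Nat.even_sub hlltN.le]
          constructor
          · intro _; exact hle
          · intro _; exact even_two_mul S.r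
    have hfwdE1 : S.O (J.c.f ((E1n : ℕ) : ZMod (2 * S.r))) (J.c.f (((E1n : ℕ) : ZMod (2 * S.r)) + 1)) := by
      have : fwd S J.c ((E1n : ℕ) : ZMod (2 * S.r)) := (hfwdc _).mpr ((hval E1n).mpr hE1ev)
      exact this
    have hmemE1 : J.c.f ((E1n : ℕ) : ZMod (2 * S.r)) ∈ cycVerts J.c' := by
      rw [hE1cast]
      exact ⟨((J.qt * J.ell : ℕ) : ZMod (2 * S.r)), he1⟩
    obtain ⟨ρ, hρG, hρc, hρE'⟩ := rot_exists J hdeg h2 hfwdE1 hmemE1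
    have hρv : ρ J.v = J.c.f ((E1n : ℕ) : ZMod (2 * S.r)) := by
      have := hρc 0
      rw [J.hc, add_zero] at this
      exact this
    have hρp : ρ (J.c'.f 0) = J.c'.f ((J.qt * J.ell : ℕ)) := by
      rw [J.hc', hρv, hE1cast, ← he1]
    have hρc' : ∀ j, ρ (J.c'.f j) = J.c'.f (((J.qt * J.ell : ℕ) : ZMod (2 * S.r)) + j) := by
      rcases classify hdeg h2 hρG hρE' hρp with h | h
      · exact h
      · exfalso
        have hA : ρ (ρ J.v) = J.v := by
          rw [show J.v = J.c'.f 0 from J.hc'.symm]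
          rw [hρp, h]
          rw [sub_self]
        have hB : ρ (ρ J.v) = J.c.f (((E1n : ℕ) : ZMod (2 * S.r)) + ((E1n : ℕ) : ZMod (2 * S.r))) := by
          rw [hρv, hρc]
        rw [hA] at hB
        have hC : J.c.f 0 = J.c.f (((E1n : ℕ) : ZMod (2 * S.r)) + ((E1n : ℕ) : ZMod (2 * S.r))) := by
          rw [J.hc]; exact hB
        have hD := J.c.inj hC
        have hE : ((2 * J.ell : ℕ) : ZMod (2 * S.r)) = 0 := by
          have h2e : e1 + e1 = 0 := by rw [← hE1cast]; exact hD.symm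
          rcases he1or with h' | h'
          · rw [h'] at h2e; push_cast at h2e ⊢; linear_combination h2e
          · rw [h'] at h2e; push_cast at h2e ⊢; linear_combination -h2e
        exact h2l0 hE
    -- the rotation family
    have Fam : ∀ k : ℕ, J.c.f ((E1n * k : ℕ)) = J.c'.f ((J.qt * J.ell * k : ℕ)) := by
      intro k
      induction k with
      | zero =>
        rw [mul_zero, mul_zero, Nat.cast_zero, J.hc, J.hc']
      | succ k ih =>
        have eL : ((E1n * (k + 1) : ℕ) : ZMod (2 * S.r)) =
            ((E1n : ℕ) : ZMod (2 * S.r)) + ((E1n * k : ℕ) : ZMod (2 * S.r)) := by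
          push_cast; ring
        have eR : ((J.qt * J.ell * (k + 1) : ℕ) : ZMod (2 * S.r)) =
            ((J.qt * J.ell : ℕ) : ZMod (2 * S.r)) + ((J.qt * J.ell * k : ℕ) : ZMod (2 * S.r)) := by
          push_cast; ring
        rw [eL, eR, ← hρc, ih, hρc']
    have hKey := Fam J.qh
    have eL : ((E1n * J.qh : ℕ) : ZMod (2 * S.r)) = e1 * ((J.qh : ℕ) : ZMod (2 * S.r)) := by
      rw [← hE1cast]; push_cast; ring
    rcases he1or with hE | hE
    · have eL2 : ((E1n * J.qh : ℕ) : ZMod (2 * S.r)) = ((J.qh * J.ell : ℕ) : ZMod (2 * S.r)) := by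
        rw [eL, hE]; push_cast; ring
      rw [eL2, he2] at hKey
      have hinj := J.c'.inj hKey
      apply hfin (J.qt * J.qh)
      have e3 : ((J.qt * J.qh * J.ell : ℕ) : ZMod (2 * S.r)) = e2 := by
        rw [hinj]; push_cast; ring
      rcases he2or with h' | h'
      · left; rw [e3, h']
      · right; rw [e3, h']
    · have eL2 : ((E1n * J.qh : ℕ) : ZMod (2 * S.r)) = -((J.qh * J.ell : ℕ) : ZMod (2 * S.r)) := by
        rw [eL, hE]; push_cast; ring
      have hth : J.c.f (-((J.qh * J.ell : ℕ) : ZMod (2 * S.r))) = J.c'.f (-e2) := by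
        have h9 := congrArg (θ : V → V) he2
        rw [hθc, hθc'] at h9
        exact h9
      rw [eL2, hth] at hKey
      have hinj := J.c'.inj hKey
      apply hfin (J.qt * J.qh)
      have e3 : ((J.qt * J.qh * J.ell : ℕ) : ZMod (2 * S.r)) = -e2 := by
        rw [← neg_neg e2, hinj]; push_cast; ring
      rcases he2or with h' | h'
      · right; rw [e3, h']
      · left; rw [e3, h', neg_neg]
  · -- ====================== ℓ odd ======================
    have hNe2 : Even (2 * S.r) := even_two_mul S.r
    -- the attachment points of `c'` at positions `±qtℓ`, `±e2` are odd (tails of `c'`)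
    have hqtlodd : Odd (J.qt * J.ell) := by
      have hp1 := hpar e1 (((J.qt * J.ell : ℕ)) : ZMod (2 * S.r)) he1.symm
      have hpe1 : ¬ Even e1.val := by
        rcases he1or with h' | h'
        · rw [h', hval]
          exact Nat.not_even_iff_odd.mpr hlo
        · rw [h', ← hnegrep J.ell hlltN.le, hval, Nat.even_sub hlltN.le]
          intro hiff
          exact (Nat.not_even_iff_odd.mpr hlo) (hiff.mp hNe2)
      rw [hval] at hp1
      rw [← Nat.not_even_iff_odd]
      tauto
    have hqhlodd : Odd (J.qh * J.ell) := by
      have hp1 := hpar (((J.qh * J.ell : ℕ)) : ZMod (2 * S.r)) e2 he2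
      have hpe2 : ¬ Even e2.val := by
        rcases he2or with h' | h'
        · rw [h', hval]
          exact Nat.not_even_iff_odd.mpr hlo
        · rw [h', ← hnegrep J.ell hlltN.le, hval, Nat.even_sub hlltN.le]
          intro hiff
          exact (Nat.not_even_iff_odd.mpr hlo) (hiff.mp hNe2)
      rw [hval] at hp1
      rw [← Nat.not_even_iff_odd]
      tauto
    have hqt_odd : Odd J.qt := (Nat.odd_mul.mp hqtlodd).1
    have hqh_odd : Odd J.qh := (Nat.odd_mul.mp hqhlodd).1
    -- the case `a = 4`
    by_cases ha4 : S.att ∣ 4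
    · have h4 : S.att = 4 := by
        rcases ha4 with ⟨k, hk⟩
        rcases k with _ | _ | k
        · omega
        · omega
        · exfalso; nlinarith
      rw [h4]
      exact odd_cast_four (Nat.odd_mul.mpr ⟨hqt_odd, hqh_odd⟩)
    -- closure of the attachment set under differences of tails of `c'`
    have hIdiff : ∀ k₁ k₂ : ZMod (2 * S.r), fwd S J.c' k₁ → fwd S J.c' k₂ →
        J.c'.f k₁ ∈ cycVerts J.c → J.c'.f k₂ ∈ cycVerts J.c →
        ∀ x : ZMod (2 * S.r), J.c.f x ∈ cycVerts J.c' →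
          J.c.f (k₂ - k₁ + x) ∈ cycVerts J.c' := by
      intro k₁ k₂ hf1 hf2 hm1 hm2 x hx
      obtain ⟨s1, hs1G, hs1j, hs1E⟩ := swap_exists J hdeg h2 hf1 hm1
      obtain ⟨s2, hs2G, hs2j, hs2E⟩ := swap_exists J hdeg h2 hf2 hm2
      have hxi : (s1⁻¹ : S.Γ ≃g S.Γ) (s2 (J.c.f x)) = J.c.f (k₂ - k₁ + x) := by
        rw [hs2j]
        have h9 := hs1j (k₂ + x - k₁)
        rw [show k₁ + (k₂ + x - k₁) = k₂ + x by ring] at h9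
        rw [← h9]
        exact (s1.toEquiv.symm_apply_apply _).trans (congrArg J.c.f (by ring))
      have hm3 := verts_map hs2E hx
      have hm4 := verts_map (image_inv hs1E) hm3
      rwa [hxi] at hm4
    -- closure of the attachment set under rotations
    have hIadd : ∀ t : ZMod (2 * S.r), fwd S J.c t → J.c.f t ∈ cycVerts J.c' →
        ∀ x, J.c.f x ∈ cycVerts J.c' → J.c.f (t + x) ∈ cycVerts J.c' := by
      intro t hft hmt x hx
      obtain ⟨p, hpG, hpj, hpE⟩ := rot_exists J hdeg h2 hft hmt
      have := verts_map hpE hx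
      rwa [hpj x] at this
    have hv_mem : J.c.f 0 ∈ cycVerts J.c' := ⟨0, by rw [J.hc', J.hc]⟩
    have hQle : J.qt * J.ell ≤ 2 * S.r := by
      have : J.qt * J.ell < S.att * J.ell := (Nat.mul_lt_mul_right hl).mpr hqtlt
      omega
    -- the four tails of `c'` lying on `c`
    have hfQ : fwd S J.c' (((J.qt * J.ell : ℕ)) : ZMod (2 * S.r)) := by
      rw [hfwdc', hval]
      exact Nat.not_even_iff_odd.mpr hqtlodd
    have hmQ : J.c'.f (((J.qt * J.ell : ℕ)) : ZMod (2 * S.r)) ∈ cycVerts J.c := ⟨e1, he1.symm⟩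
    have hfQn : fwd S J.c' (-(((J.qt * J.ell : ℕ)) : ZMod (2 * S.r))) := by
      rw [hfwdc', ← hnegrep _ hQle, hval, Nat.even_sub hQle]
      intro hiff
      exact (Nat.not_even_iff_odd.mpr hqtlodd) (hiff.mp hNe2)
    have hmQn : J.c'.f (-(((J.qt * J.ell : ℕ)) : ZMod (2 * S.r))) ∈ cycVerts J.c := by
      refine ⟨-e1, ?_⟩
      have h9 := congrArg (θ : V → V) he1
      rw [hθc', hθc] at h9
      exact h9.symm
    have hfe2 : fwd S J.c' e2 := by
      rw [hfwdc']
      rcases he2or with h' | h'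
      · rw [h', hval]
        exact Nat.not_even_iff_odd.mpr hlo
      · rw [h', ← hnegrep J.ell hlltN.le, hval, Nat.even_sub hlltN.le]
        intro hiff
        exact (Nat.not_even_iff_odd.mpr hlo) (hiff.mp hNe2)
    have hme2 : J.c'.f e2 ∈ cycVerts J.c := ⟨((J.qh * J.ell : ℕ)) , he2⟩
    -- `c.f (2·e2)` lies on `c'`
    have hu1 : J.c.f (e2 - (((J.qt * J.ell : ℕ)) : ZMod (2 * S.r)) + 0) ∈ cycVerts J.c' :=
      hIdiff _ _ hfQ hfe2 hmQ hme2 0 hv_mem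
    have hu2 : J.c.f (e2 - (-(((J.qt * J.ell : ℕ)) : ZMod (2 * S.r))) + 0) ∈ cycVerts J.c' :=
      hIdiff _ _ hfQn hfe2 hmQn hme2 0 hv_mem
    obtain ⟨E2n, hE2cast, hE2odd⟩ : ∃ m : ℕ, ((m : ℕ) : ZMod (2 * S.r)) = e2 ∧ Odd m := by
      rcases he2or with h' | h'
      · exact ⟨J.ell, h'.symm, hlo⟩
      · refine ⟨2 * S.r - J.ell, by rw [h', hnegrep J.ell hlltN.le], ?_⟩
        rw [← Nat.not_even_iff_odd, Nat.even_sub hlltN.le]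
        intro hiff
        exact (Nat.not_even_iff_odd.mpr hlo) (hiff.mp hNe2)
    have hft : fwd S J.c (e2 - (((J.qt * J.ell : ℕ)) : ZMod (2 * S.r))) := by
      have hrep : e2 - (((J.qt * J.ell : ℕ)) : ZMod (2 * S.r)) =
          ((E2n + (2 * S.r - J.qt * J.ell) : ℕ) : ZMod (2 * S.r)) := by
        rw [Nat.cast_add, Nat.cast_sub hQle, ZMod.natCast_self, hE2cast]
        ring
      rw [hrep, hfwdc, hval]
      refine Odd.add_odd hE2odd ?_
      rw [← Nat.not_even_iff_odd, Nat.even_sub hQle]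
      intro hiff
      exact (Nat.not_even_iff_odd.mpr hqtlodd) (hiff.mp hNe2)
    have h2e2 : J.c.f (e2 + e2) ∈ cycVerts J.c' := by
      have h9 := hIadd _ hft (by rwa [add_zero] at hu1) _ hu2
      rwa [show e2 - (((J.qt * J.ell : ℕ)) : ZMod (2 * S.r)) +
        (e2 - (-(((J.qt * J.ell : ℕ)) : ZMod (2 * S.r))) + 0) = e2 + e2 by ring] at h9
    have h2l : J.c.f (((2 * J.ell : ℕ)) : ZMod (2 * S.r)) ∈ cycVerts J.c' := by
      rcases he2or with h' | h'
      · rw [show (((2 * J.ell : ℕ)) : ZMod (2 * S.r)) = e2 + e2 by rw [h']; push_cast; ring]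
        exact h2e2
      · have hneg : J.c.f (-(((2 * J.ell : ℕ)) : ZMod (2 * S.r))) ∈ cycVerts J.c' := by
          rw [show -(((2 * J.ell : ℕ)) : ZMod (2 * S.r)) = e2 + e2 by rw [h']; push_cast; ring]
          exact h2e2
        have h9 := verts_map hθEc' hneg
        rwa [hθc, neg_neg] at h9
    -- the rotation by 2ℓ
    have hfwd2l : S.O (J.c.f (((2 * J.ell : ℕ)) : ZMod (2 * S.r)))
        (J.c.f ((((2 * J.ell : ℕ)) : ZMod (2 * S.r)) + 1)) := by
      have : fwd S J.c (((2 * J.ell : ℕ)) : ZMod (2 * S.r)) := by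
        rw [hfwdc, hval]
        exact even_two_mul J.ell
      exact this
    obtain ⟨ρ, hρG, hρj, hρE⟩ := rot_exists J hdeg h2 hfwd2l h2l
    obtain ⟨M, hM⟩ := h2l
    have hρv : ρ J.v = J.c.f (((2 * J.ell : ℕ)) : ZMod (2 * S.r)) := by
      have := hρj 0
      rw [J.hc, add_zero] at this
      exact this
    have hρp : ρ (J.c'.f 0) = J.c'.f M := by
      rw [J.hc', hρv, ← hM]
    have hρc' : ∀ j, ρ (J.c'.f j) = J.c'.f (M + j) := by
      rcases classify hdeg h2 hρG hρE hρp with h | h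
      · exact h
      · exfalso
        have hA : ρ (ρ J.v) = J.v := by
          rw [show J.v = J.c'.f 0 from J.hc'.symm, hρp, h, sub_self]
        have hB : ρ (ρ J.v) = J.c.f ((((2 * J.ell : ℕ)) : ZMod (2 * S.r)) +
            (((2 * J.ell : ℕ)) : ZMod (2 * S.r))) := by
          rw [hρv, hρj]
        rw [hA] at hB
        have hC := J.c.inj (J.hc.symm ▸ hB : J.c.f 0 = _)
        have h4l : ((4 * J.ell : ℕ) : ZMod (2 * S.r)) = 0 := by
          push_cast at hC ⊢
          linear_combination -hC
        rw [ZMod.natCast_eq_zero_iff, ← hal] at h4l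
        have : 4 * J.ell = 4 * J.ell := rfl
        exact ha4 ((Nat.mul_dvd_mul_iff_right hl).mp h4l)
    -- the family of images of `v` under powers of ρ
    have Fam : ∀ k : ℕ, J.c.f (e1 + ((2 * J.ell * k : ℕ) : ZMod (2 * S.r))) =
        J.c'.f ((((J.qt * J.ell : ℕ)) : ZMod (2 * S.r)) + ((k : ℕ) : ZMod (2 * S.r)) * M) := by
      intro k
      induction k with
      | zero =>
        have hz1 : ((2 * J.ell * 0 : ℕ) : ZMod (2 * S.r)) = 0 := by push_cast; ring
        have hz2 : (((0 : ℕ)) : ZMod (2 * S.r)) * M = 0 := by push_cast; ring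
        rw [hz1, hz2, add_zero, add_zero]
        exact he1.symm
      | succ k ih =>
        have eL : e1 + ((2 * J.ell * (k + 1) : ℕ) : ZMod (2 * S.r)) =
            ((2 * J.ell : ℕ) : ZMod (2 * S.r)) + (e1 + ((2 * J.ell * k : ℕ) : ZMod (2 * S.r))) := by
          push_cast; ring
        have eR : (((J.qt * J.ell : ℕ)) : ZMod (2 * S.r)) + (((k + 1 : ℕ)) : ZMod (2 * S.r)) * M =
            M + ((((J.qt * J.ell : ℕ)) : ZMod (2 * S.r)) + ((k : ℕ) : ZMod (2 * S.r)) * M) := by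
          push_cast; ring
        rw [eL, eR, ← hρj, ih, hρc']
    -- `a • M = 0`
    have hzM : ((S.att : ℕ) : ZMod (2 * S.r)) * M = 0 := by
      have hF := Fam S.att
      have e0 : ((2 * J.ell * S.att : ℕ) : ZMod (2 * S.r)) = 0 := by
        rw [ZMod.natCast_eq_zero_iff]
        exact ⟨2, by rw [← hal]; ring⟩
      rw [e0, add_zero] at hF
      have h5 := J.c'.inj (he1.trans hF)
      linear_combination -h5
    obtain ⟨mh, hmh⟩ := hqh_odd
    rcases he1or with hE | hE
    · -- e1 = ℓ
      have hF2 := Fam (S.att - 1)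
      have eidx : e1 + ((2 * J.ell * (S.att - 1) : ℕ) : ZMod (2 * S.r)) =
          -((J.ell : ℕ) : ZMod (2 * S.r)) := by
        rw [hE]
        push_cast [Nat.cast_sub (by omega : 1 ≤ S.att)]
        linear_combination 2 * hN0
      have hth1 : J.c.f (-((J.ell : ℕ) : ZMod (2 * S.r))) =
          J.c'.f (-(((J.qt * J.ell : ℕ)) : ZMod (2 * S.r))) := by
        have h9 := congrArg (θ : V → V) he1
        rw [hθc', hθc, hE] at h9
        exact h9.symm
      rw [eidx, hth1] at hF2
      have h6 := J.c'.inj hF2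
      have hMeq : M = 2 * (((J.qt * J.ell : ℕ)) : ZMod (2 * S.r)) := by
        have hsub : ((S.att - 1 : ℕ) : ZMod (2 * S.r)) = ((S.att : ℕ) : ZMod (2 * S.r)) - 1 := by
          push_cast [Nat.cast_sub (by omega : 1 ≤ S.att)]
          ring
        rw [hsub] at h6
        linear_combination h6 + hzM
      have hF1 := Fam mh
      have eidx1 : e1 + ((2 * J.ell * mh : ℕ) : ZMod (2 * S.r)) =
          ((J.qh * J.ell : ℕ) : ZMod (2 * S.r)) := by
        rw [hE]
        push_cast [hmh]
        ring
      rw [eidx1, he2] at hF1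
      have h7 := J.c'.inj hF1
      apply hfin (J.qt * J.qh)
      have final : ((J.qt * J.qh * J.ell : ℕ) : ZMod (2 * S.r)) = e2 := by
        rw [h7, hMeq]
        push_cast [hmh]
        ring
      rcases he2or with h' | h'
      · left; rw [final, h']
      · right; rw [final, h']
    · -- e1 = -ℓ
      have hF2 := Fam 1
      have eidx : e1 + ((2 * J.ell * 1 : ℕ) : ZMod (2 * S.r)) = ((J.ell : ℕ) : ZMod (2 * S.r)) := by
        rw [hE]; push_cast; ring
      have hth1 : J.c.f (((J.ell : ℕ)) : ZMod (2 * S.r)) =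
          J.c'.f (-(((J.qt * J.ell : ℕ)) : ZMod (2 * S.r))) := by
        have h9 := congrArg (θ : V → V) he1
        rw [hθc', hθc, hE, neg_neg] at h9
        exact h9.symm
      rw [eidx, hth1] at hF2
      have h6 := J.c'.inj hF2
      have hMeq : M = -(2 * (((J.qt * J.ell : ℕ)) : ZMod (2 * S.r))) := by
        push_cast at h6 ⊢
        linear_combination -h6
      have hF1 := Fam (mh + 1)
      have eidx1 : e1 + ((2 * J.ell * (mh + 1) : ℕ) : ZMod (2 * S.r)) =
          ((J.qh * J.ell : ℕ) : ZMod (2 * S.r)) := by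
        rw [hE]
        push_cast [hmh]
        ring
      rw [eidx1, he2] at hF1
      have h7 := J.c'.inj hF1
      apply hfin (J.qt * J.qh)
      have final : ((J.qt * J.qh * J.ell : ℕ) : ZMod (2 * S.r)) = -e2 := by
        rw [← neg_neg e2, h7, hMeq]
        push_cast [hmh]
        ring
      rcases he2or with h' | h'
      · right; rw [final, h']
      · left; rw [final, h', neg_neg]

end HalfArcAux

/-- Lemma 3.2 of the paper:
`gcd(a, q_t) = gcd(a, q_h) = 1` and `q_t q_h ≡ ±1 (mod a)`. -/
theorem statement_1 {V : Type*} (S : Setup V) (J : JumpData S) :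
    Nat.gcd S.att J.qt = 1 ∧ Nat.gcd S.att J.qh = 1 ∧
    (((J.qt * J.qh : ℕ) : ZMod S.att) = 1 ∨ ((J.qt * J.qh : ℕ) : ZMod S.att) = -1) := by
  have hkey := HalfArcAux.key S J
  haveI : NeZero S.att := ⟨S.att_pos.ne'⟩
  have hu : IsUnit ((J.qt : ℕ) : ZMod S.att) := by
    rcases hkey with h | h
    · refine IsUnit.of_mul_eq_one ((J.qh : ℕ) : ZMod S.att) ?_
      push_cast at h
      exact h
    · refine IsUnit.of_mul_eq_one (-((J.qh : ℕ) : ZMod S.att)) ?_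
      push_cast at h
      linear_combination -h
  have hu' : IsUnit ((J.qh : ℕ) : ZMod S.att) := by
    rcases hkey with h | h
    · refine IsUnit.of_mul_eq_one ((J.qt : ℕ) : ZMod S.att) ?_
      push_cast at h
      linear_combination h
    · refine IsUnit.of_mul_eq_one (-((J.qt : ℕ) : ZMod S.att)) ?_
      push_cast at h
      linear_combination -h
  refine ⟨?_, ?_, hkey⟩
  · exact ((ZMod.isUnit_iff_coprime J.qt S.att).mp hu).symm
  · exact ((ZMod.isUnit_iff_coprime J.qh S.att).mp hu').symm
end

section
/- Let Γ be a tetravalent G-half-arc-transitive graph for some G ≤ Aut(Γ), let a = att_G(Γ) and let Q_G(Γ) = {q_t, q_h}. If a > 2 then q_t < a/2 and q_h < a/2, while if a = 2 then q_t = q_h = 1 = a/2. -/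
/-! Common definitions for tetravalent half-arc-transitive graph theory. -/

open SimpleGraph Set

namespace HalfArcAux

open HalfArc

variable {V : Type*}

/-- If a set has `ncard = 2` and contains two distinct elements `a, b`, every element is
`a` or `b`. -/
lemma mem_pair_of_ncard_two {s : Set V} (h : s.ncard = 2) {a b x : V}
    (ha : a ∈ s) (hb : b ∈ s) (hab : a ≠ b) (hx : x ∈ s) : x = a ∨ x = b := by
  obtain ⟨y, z, hyz, rfl⟩ := Set.ncard_eq_two.mp h
  simp only [Set.mem_insert_iff, Set.mem_singleton_iff] at ha hb hx
  rcases ha with rfl | rfl <;> rcases hb with rfl | rfl <;> tauto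

section Setup

variable (S : Setup V)

lemma O_iff {g : S.Γ ≃g S.Γ} (hg : g ∈ S.G) (u v : V) : S.O (g u) (g v) ↔ S.O u v := by
  constructor
  · intro h
    have h' := S.O_inv g⁻¹ (S.G.inv_mem hg) h
    simpa using h'
  · exact fun h => S.O_inv g hg h

/-- The reverse of an alternating cycle. -/
def rev {n : ℕ} (c : AltCycle S.Γ S.O n) : AltCycle S.Γ S.O n where
  f i := c.f (-i)
  inj := fun a b h => by simpa [neg_inj] using c.inj h
  adj i := by
    have h := (c.adj (-(i+1))).symm
    rwa [show -(i+1) + 1 = -i by ring] at h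
  alt i := by
    have h := c.alt (-(i+2))
    rw [show -(i+2) + 1 = -(i+1) by ring, show -(i+2) + 2 = -i by ring] at h
    exact h.symm

@[simp] lemma rev_f {n : ℕ} (c : AltCycle S.Γ S.O n) (i : ZMod n) :
    (rev S c).f i = c.f (-i) := rfl

/-- The image of an alternating cycle under an element of `G`. -/
def mapG {n : ℕ} (g : S.Γ ≃g S.Γ) (hg : g ∈ S.G) (c : AltCycle S.Γ S.O n) :
    AltCycle S.Γ S.O n where
  f i := g (c.f i)
  inj := fun a b h => c.inj (g.injective h)
  adj i := g.map_adj_iff.mpr (c.adj i)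
  alt i := by rw [O_iff S hg, O_iff S hg]; exact c.alt i

@[simp] lemma mapG_f {n : ℕ} (g : S.Γ ≃g S.Γ) (hg : g ∈ S.G) (c : AltCycle S.Γ S.O n)
    (i : ZMod n) : (mapG S g hg c).f i = g (c.f i) := rfl

lemma cycEdges_congr {n : ℕ} {c d : AltCycle S.Γ S.O n} (h : ∀ i, c.f i = d.f i) :
    cycEdges c = cycEdges d := by
  unfold cycEdges
  have he : (fun i : ZMod n => s(c.f i, c.f (i+1))) = fun i : ZMod n => s(d.f i, d.f (i+1)) := by
    funext i; rw [h, h]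
  rw [he]

lemma cycEdges_rev {n : ℕ} (c : AltCycle S.Γ S.O n) : cycEdges (rev S c) = cycEdges c := by
  unfold cycEdges
  ext e
  constructor
  · rintro ⟨i, rfl⟩
    exact ⟨-(i+1), by simp only [rev_f]; rw [show -(i+1) + 1 = -i by ring]; exact Sym2.eq_swap.symm⟩
  · rintro ⟨i, rfl⟩
    exact ⟨-(i+1), by simp only [rev_f]; rw [show -(-(i+1)) = i + 1 by ring,
      show -(-(i+1)+1) = i by ring]; exact Sym2.eq_swap.symm⟩

/-- Out-degree and in-degree with respect to `O` are both `2` at every vertex. -/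
lemma deg_two (v₀ : V) :
    ∀ u : V, ({x | S.O u x}).ncard = 2 ∧ ({x | S.O x u}).ncard = 2 := by
  classical
  have : Finite V := S.finite
  have : Fintype V := Fintype.ofFinite V
  -- sum of outdegrees equals sum of indegrees
  have hsum : ∑ u : V, (Finset.univ.filter fun x => S.O u x).card
      = ∑ u : V, (Finset.univ.filter fun x => S.O x u).card := by
    simp only [Finset.card_filter]
    exact Finset.sum_comm
  -- degrees are constant
  have hmapout : ∀ (g : S.Γ ≃g S.Γ), g ∈ S.G → ∀ u : V,
      (Finset.univ.filter fun x => S.O u x).card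
        = (Finset.univ.filter fun x => S.O (g u) x).card := by
    intro g hg u
    refine Finset.card_bij' (fun x _ => g x) (fun y _ => g.symm y) ?_ ?_ ?_ ?_
    · intro x hx
      simp only [Finset.mem_filter, Finset.mem_univ, true_and] at hx ⊢
      exact (O_iff S hg u x).mpr hx
    · intro y hy
      simp only [Finset.mem_filter, Finset.mem_univ, true_and] at hy ⊢
      have : S.O (g u) (g (g.symm y)) := by rwa [g.apply_symm_apply]
      exact (O_iff S hg u (g.symm y)).mp this
    · intro x _; exact g.symm_apply_apply x
    · intro y _; exact g.apply_symm_apply y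
  have hmapin : ∀ (g : S.Γ ≃g S.Γ), g ∈ S.G → ∀ u : V,
      (Finset.univ.filter fun x => S.O x u).card
        = (Finset.univ.filter fun x => S.O x (g u)).card := by
    intro g hg u
    refine Finset.card_bij' (fun x _ => g x) (fun y _ => g.symm y) ?_ ?_ ?_ ?_
    · intro x hx
      simp only [Finset.mem_filter, Finset.mem_univ, true_and] at hx ⊢
      exact (O_iff S hg x u).mpr hx
    · intro y hy
      simp only [Finset.mem_filter, Finset.mem_univ, true_and] at hy ⊢
      have : S.O (g (g.symm y)) (g u) := by rwa [g.apply_symm_apply]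
      exact (O_iff S hg (g.symm y) u).mp this
    · intro x _; exact g.symm_apply_apply x
    · intro y _; exact g.apply_symm_apply y
  have hconstout : ∀ u : V, (Finset.univ.filter fun x => S.O u x).card
      = (Finset.univ.filter fun x => S.O v₀ x).card := by
    intro u
    obtain ⟨g, hg, hgu⟩ := S.hat.1 u v₀
    rw [hmapout g hg u, hgu]
  have hconstin : ∀ u : V, (Finset.univ.filter fun x => S.O x u).card
      = (Finset.univ.filter fun x => S.O x v₀).card := by
    intro u
    obtain ⟨g, hg, hgu⟩ := S.hat.1 u v₀
    rw [hmapin g hg u, hgu]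
  -- hence out-degree equals in-degree everywhere
  have hcard : 0 < Fintype.card V := Fintype.card_pos_iff.mpr ⟨v₀⟩
  have hout_eq_in : (Finset.univ.filter fun x => S.O v₀ x).card
      = (Finset.univ.filter fun x => S.O x v₀).card := by
    have h1 : ∑ u : V, (Finset.univ.filter fun x => S.O u x).card
        = Fintype.card V * (Finset.univ.filter fun x => S.O v₀ x).card := by
      rw [Finset.sum_congr rfl fun u _ => hconstout u, Finset.sum_const, smul_eq_mul,
        Finset.card_univ]
    have h2 : ∑ u : V, (Finset.univ.filter fun x => S.O x u).card
        = Fintype.card V * (Finset.univ.filter fun x => S.O x v₀).card := by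
      rw [Finset.sum_congr rfl fun u _ => hconstin u, Finset.sum_const, smul_eq_mul,
        Finset.card_univ]
    have := hsum
    rw [h1, h2] at this
    exact Nat.eq_of_mul_eq_mul_left hcard this
  -- out-set and in-set partition the neighbour set
  have hpart : ∀ u : V, ({x | S.O u x}).ncard + ({x | S.O x u}).ncard = 4 := by
    intro u
    have hdisj : Disjoint {x | S.O u x} {x | S.O x u} := by
      rw [Set.disjoint_left]
      intro x hx hx'
      exact ((S.O_choice (S.O_adj hx)).mp hx) hx'
    have hunion : {x | S.O u x} ∪ {x | S.O x u} = S.Γ.neighborSet u := by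
      ext x
      simp only [Set.mem_union, Set.mem_setOf_eq, SimpleGraph.mem_neighborSet]
      constructor
      · rintro (h | h)
        · exact S.O_adj h
        · exact (S.O_adj h).symm
      · intro h
        by_cases hx : S.O x u
        · exact Or.inr hx
        · exact Or.inl ((S.O_choice h).mpr hx)
    rw [← Set.ncard_union_eq hdisj (Set.toFinite _) (Set.toFinite _), hunion, S.tetra u]
  -- convert `ncard` to `Finset.card`
  have hncard_out : ∀ u : V, ({x | S.O u x}).ncard = (Finset.univ.filter fun x => S.O u x).card := by
    intro u
    rw [Set.ncard_eq_toFinset_card', Set.toFinset_setOf]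
  have hncard_in : ∀ u : V, ({x | S.O x u}).ncard = (Finset.univ.filter fun x => S.O x u).card := by
    intro u
    rw [Set.ncard_eq_toFinset_card', Set.toFinset_setOf]
  intro u
  have he : ({x | S.O u x}).ncard = ({x | S.O x u}).ncard := by
    rw [hncard_out, hncard_in, hconstout u, hconstin u, hout_eq_in]
  have hp := hpart u
  omega

/-- Two alternating cycles agreeing at `0` and `1` agree everywhere. -/
lemma alt_unique
    (hdeg : ∀ u : V, ({x | S.O u x}).ncard = 2 ∧ ({x | S.O x u}).ncard = 2)
    (h2 : (2 : ZMod (2 * S.r)) ≠ 0)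
    (c d : AltCycle S.Γ S.O (2 * S.r)) (h0 : c.f 0 = d.f 0) (h1 : c.f 1 = d.f 1) :
    ∀ i, c.f i = d.f i := by
  haveI : NeZero (2 * S.r) := ⟨by have := S.r_pos; omega⟩
  have step : ∀ i : ZMod (2 * S.r), c.f i = d.f i → c.f (i + 1) = d.f (i + 1) →
      c.f (i + 2) = d.f (i + 2) := by
    intro i ha hb
    by_contra hxy
    have hadjx : S.Γ.Adj (c.f (i+1)) (c.f (i+2)) := by
      have h := c.adj (i+1); rwa [show i+1+1 = i+2 by ring] at h
    have hadjy : S.Γ.Adj (c.f (i+1)) (d.f (i+2)) := by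
      have h := d.adj (i+1); rw [show i+1+1 = i+2 by ring] at h; rwa [← hb] at h
    have hadju : S.Γ.Adj (c.f (i+1)) (c.f i) := (c.adj i).symm
    have hxu : c.f (i+2) ≠ c.f i := by
      intro h
      have h' := c.inj h
      exact h2 (by have : i + 2 = i + 0 := by rw [h']; ring
                   exact add_left_cancel this)
    have hyu : d.f (i+2) ≠ c.f i := by
      intro h
      rw [ha] at h
      have h' := d.inj h
      exact h2 (by have : i + 2 = i + 0 := by rw [h']; ring
                   exact add_left_cancel this)
    have hx_iff : S.O (c.f i) (c.f (i+1)) ↔ S.O (c.f (i+2)) (c.f (i+1)) := c.alt i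
    have hy_iff : S.O (c.f i) (c.f (i+1)) ↔ S.O (d.f (i+2)) (c.f (i+1)) := by
      have h := d.alt i; rwa [← ha, ← hb] at h
    by_cases hO : S.O (c.f (i+2)) (c.f (i+1))
    · have h1' : S.O (c.f i) (c.f (i+1)) := hx_iff.mpr hO
      have h2' : S.O (d.f (i+2)) (c.f (i+1)) := hy_iff.mp h1'
      have := mem_pair_of_ncard_two (hdeg (c.f (i+1))).2
        (show c.f i ∈ {x | S.O x (c.f (i+1))} from h1')
        (show c.f (i+2) ∈ {x | S.O x (c.f (i+1))} from hO)
        (Ne.symm hxu) (show d.f (i+2) ∈ {x | S.O x (c.f (i+1))} from h2')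
      rcases this with h | h
      · exact hyu h
      · exact hxy h.symm
    · have hwx : S.O (c.f (i+1)) (c.f (i+2)) := (S.O_choice hadjx).mpr hO
      have hu : ¬ S.O (c.f i) (c.f (i+1)) := fun h => hO (hx_iff.mp h)
      have hwu : S.O (c.f (i+1)) (c.f i) := (S.O_choice hadju).mpr hu
      have hy' : ¬ S.O (d.f (i+2)) (c.f (i+1)) := fun h => hu (hy_iff.mpr h)
      have hwy : S.O (c.f (i+1)) (d.f (i+2)) := (S.O_choice hadjy).mpr hy'
      have := mem_pair_of_ncard_two (hdeg (c.f (i+1))).1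
        (show c.f i ∈ {x | S.O (c.f (i+1)) x} from hwu)
        (show c.f (i+2) ∈ {x | S.O (c.f (i+1)) x} from hwx)
        (Ne.symm hxu) (show d.f (i+2) ∈ {x | S.O (c.f (i+1)) x} from hwy)
      rcases this with h | h
      · exact hyu h
      · exact hxy h.symm
  have main : ∀ m : ℕ, c.f (m : ZMod (2 * S.r)) = d.f (m : ZMod (2 * S.r)) ∧
      c.f ((m + 1 : ℕ) : ZMod (2 * S.r)) = d.f ((m + 1 : ℕ) : ZMod (2 * S.r)) := by
    intro m
    induction m with
    | zero => simpa using ⟨h0, h1⟩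
    | succ k ih =>
      refine ⟨ih.2, ?_⟩
      have hstep := step (k : ZMod (2 * S.r)) ih.1 (by push_cast at ih ⊢; exact ih.2)
      push_cast
      have e2 : ((k : ZMod (2 * S.r)) + 1) + 1 = (k : ZMod (2 * S.r)) + 2 := by ring
      rw [e2]
      exact hstep
  intro i
  have h := (main i.val).1
  rwa [ZMod.natCast_rightInverse i] at h

end Setup

end HalfArcAux


open HalfArc

/-- if `a > 2` then `q_t, q_h < a/2`, while if `a = 2` then
`q_t = q_h = 1 = a/2`. -/
theorem statement_2 {V : Type*} (S : Setup V) (J : JumpData S) :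
    (2 < S.att → 2 * J.qt < S.att ∧ 2 * J.qh < S.att) ∧
    (S.att = 2 → J.qt = 1 ∧ J.qh = 1 ∧ 1 = S.att / 2) := by
  classical
  obtain ⟨v, c, c', ell, hell, hc, hc', hne, htail₁, htail₂, qt, qh, hqt, hqt_min,
    hqh, hqh_min⟩ := J
  have hr := S.r_pos
  haveI : NeZero (2 * S.r) := ⟨by omega⟩
  have hellpos : 0 < ell := by
    rcases Nat.eq_zero_or_pos ell with h | h
    · rw [h, mul_zero] at hell; omega
    · exact h
  -- shared bounds `0 < q < att`, valid whenever `2 ≤ att`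
  have hccv : c.f 0 = c'.f 0 := by rw [hc, hc']
  have gen : 2 ≤ S.att → ∀ (e e' : AltCycle S.Γ S.O (2 * S.r)) (q : ℕ),
      e.f 0 = v → e'.f 0 = v →
      (e'.f ((q * ell : ℕ)) = e.f ((ell : ℕ)) ∨
        e'.f ((q * ell : ℕ)) = e.f (-(ell : ZMod (2 * S.r)))) →
      (∀ m : ℕ, m < q → ¬(e'.f ((m * ell : ℕ)) = e.f ((ell : ℕ)) ∨
        e'.f ((m * ell : ℕ)) = e.f (-(ell : ZMod (2 * S.r))))) →
      0 < q ∧ q < S.att := by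
    intro ha2 e e' q he he' hq hmin
    have helllt : ell < 2 * S.r := by
      have h1 : 1 * ell < S.att * ell := (Nat.mul_lt_mul_right hellpos).mpr (by omega)
      omega
    have hellne : ((ell : ℕ) : ZMod (2 * S.r)) ≠ 0 := by
      intro h0
      rw [ZMod.natCast_eq_zero_iff] at h0
      have := Nat.le_of_dvd hellpos h0
      omega
    have hqpos : 0 < q := by
      rcases Nat.eq_zero_or_pos q with rfl | h
      · exfalso
        rw [Nat.zero_mul, Nat.cast_zero, he', ← he] at hq
        rcases hq with h | h
        · exact hellne (e.inj h).symm
        · exact hellne (neg_eq_zero.mp (e.inj h).symm)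
      · exact h
    refine ⟨hqpos, ?_⟩
    have harith : q * ell = 2 * S.r * (q / S.att) + q % S.att * ell := by
      calc q * ell = (S.att * (q / S.att) + q % S.att) * ell := by rw [Nat.div_add_mod]
        _ = S.att * ell * (q / S.att) + q % S.att * ell := by ring
        _ = 2 * S.r * (q / S.att) + q % S.att * ell := by rw [hell]
    have hper : ((q * ell : ℕ) : ZMod (2 * S.r)) = ((q % S.att * ell : ℕ) : ZMod (2 * S.r)) := by
      rw [harith, Nat.cast_add, Nat.cast_mul, ZMod.natCast_self, zero_mul, zero_add]
    rw [hper] at hq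
    by_contra hlt
    push_neg at hlt
    have hmodlt : q % S.att < q := lt_of_lt_of_le (Nat.mod_lt q (by omega)) hlt
    exact hmin _ hmodlt hq
  constructor
  · -- the case `2 < att`
    intro ha3
    obtain ⟨hqtpos, hqtlt⟩ := gen (by omega) c c' qt hc hc' hqt hqt_min
    obtain ⟨hqhpos, hqhlt⟩ := gen (by omega) c' c qh hc' hc hqh hqh_min
    have hdeg := HalfArcAux.deg_two S v
    have hn3 : 3 ≤ 2 * S.r := by
      have : 3 * 1 ≤ S.att * ell := Nat.mul_le_mul (by omega) hellpos
      omega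
    have h2 : (2 : ZMod (2 * S.r)) ≠ 0 := by
      have h2' : ((2 : ℕ) : ZMod (2 * S.r)) ≠ 0 := by
        intro h0
        rw [ZMod.natCast_eq_zero_iff] at h0
        have := Nat.le_of_dvd (by omega) h0
        omega
      exact_mod_cast h2'
    have h2ell : ((2 * ell : ℕ) : ZMod (2 * S.r)) ≠ 0 := by
      intro h0
      rw [ZMod.natCast_eq_zero_iff] at h0
      have hlt : 2 * ell < 2 * S.r := by
        have : 3 * ell ≤ S.att * ell := Nat.mul_le_mul_right ell (by omega)
        omega
      have := Nat.le_of_dvd (by omega) h0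
      omega
    have hinj2 : ∀ e : AltCycle S.Γ S.O (2 * S.r),
        e.f ((ell : ℕ)) ≠ e.f (-(ell : ZMod (2 * S.r))) := by
      intro e h
      have h' := e.inj h
      apply h2ell
      push_cast
      linear_combination h'
    have uniq := HalfArcAux.alt_unique S hdeg h2
    -- the two arcs of `c` and of `c'` at `v` are pairwise distinct
    have h11 : c.f 1 ≠ c.f (-1) := by
      intro h
      have h' := c.inj h
      apply h2
      linear_combination h'
    have h11' : c'.f 1 ≠ c'.f (-1) := by
      intro h
      have h' := c'.inj h
      apply h2
      linear_combination h'
    have hdist1 : c'.f 1 ≠ c.f 1 := by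
      intro h
      apply hne
      have hu := uniq c' c (by rw [hc', hc]) h
      exact (HalfArcAux.cycEdges_congr S hu).symm
    have hdist2 : c'.f 1 ≠ c.f (-1) := by
      intro h
      apply hne
      have h0 : c'.f 0 = (HalfArcAux.rev S c).f 0 := by simp [hc', hc]
      have h1 : c'.f 1 = (HalfArcAux.rev S c).f 1 := by simpa using h
      have hu := uniq c' (HalfArcAux.rev S c) h0 h1
      have he := HalfArcAux.cycEdges_congr S hu
      rw [HalfArcAux.cycEdges_rev] at he
      exact he.symm
    -- `v` is the head of the two arcs of `c'` incident to it
    have halt' : S.O (c'.f (-1)) v ↔ S.O (c'.f 1) v := by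
      have h := c'.alt (-1)
      rw [show (-1 : ZMod (2 * S.r)) + 1 = 0 by ring,
        show (-1 : ZMod (2 * S.r)) + 2 = 1 by ring, hc'] at h
      exact h
    have hhead₁ : S.O (c'.f 1) v := by
      by_contra hnot
      have hadj01 : S.Γ.Adj v (c'.f 1) := by
        have h := c'.adj 0
        rwa [zero_add, hc'] at h
      have hOv1 : S.O v (c'.f 1) := (S.O_choice hadj01).mpr hnot
      rcases HalfArcAux.mem_pair_of_ncard_two (hdeg v).1
        (show c.f 1 ∈ {x | S.O v x} from htail₁)
        (show c.f (-1) ∈ {x | S.O v x} from htail₂) h11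
        (show c'.f 1 ∈ {x | S.O v x} from hOv1) with h | h
      · exact hdist1 h
      · exact hdist2 h
    have hhead₂ : S.O (c'.f (-1)) v := halt'.mpr hhead₁
    -- in- and out-neighbours of `v`
    have hout : ∀ x, S.O v x → x = c.f 1 ∨ x = c.f (-1) := fun x hx =>
      HalfArcAux.mem_pair_of_ncard_two (hdeg v).1
        (show c.f 1 ∈ {x | S.O v x} from htail₁)
        (show c.f (-1) ∈ {x | S.O v x} from htail₂) h11 hx
    have hin : ∀ x, S.O x v → x = c'.f 1 ∨ x = c'.f (-1) := fun x hx =>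
      HalfArcAux.mem_pair_of_ncard_two (hdeg v).2
        (show c'.f 1 ∈ {x | S.O x v} from hhead₁)
        (show c'.f (-1) ∈ {x | S.O x v} from hhead₂) h11' hx
    -- arithmetic on indices
    have hcast : ∀ q : ℕ, q < S.att →
        (((S.att - q) * ell : ℕ) : ZMod (2 * S.r)) = -((q * ell : ℕ) : ZMod (2 * S.r)) := by
      intro q hq
      have hle : q * ell ≤ 2 * S.r := by
        calc q * ell ≤ S.att * ell := Nat.mul_le_mul_right ell (by omega)
          _ = 2 * S.r := hell
      have h1 : (S.att - q) * ell = 2 * S.r - q * ell := by rw [Nat.sub_mul, hell]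
      rw [h1, eq_neg_iff_add_eq_zero, ← Nat.cast_add, Nat.sub_add_cancel hle, ZMod.natCast_self]
    -- the key finishing argument
    have finish : ∀ (e e' : AltCycle S.Γ S.O (2 * S.r)) (q : ℕ) (w : S.Γ ≃g S.Γ),
        (∀ i, w (e.f i) = e.f (-i)) →
        ((∀ i, w (e'.f i) = e'.f i) ∨ (∀ i, w (e'.f i) = e'.f (-i))) →
        (e'.f ((q * ell : ℕ)) = e.f ((ell : ℕ)) ∨
          e'.f ((q * ell : ℕ)) = e.f (-(ell : ZMod (2 * S.r)))) →
        (∀ m : ℕ, m < q → ¬(e'.f ((m * ell : ℕ)) = e.f ((ell : ℕ)) ∨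
          e'.f ((m * ell : ℕ)) = e.f (-(ell : ZMod (2 * S.r))))) →
        q < S.att → 2 * q < S.att := by
      intro e e' q w hwe hwe' hq hmin hqlt
      rcases hwe' with hid | hrev
      · exfalso
        rcases hq with h | h
        · have h' := congrArg w h
          rw [hid, hwe] at h'
          rw [h] at h'
          exact hinj2 e h'
        · have h' := congrArg w h
          rw [hid, hwe, neg_neg] at h'
          rw [h] at h'
          exact hinj2 e h'.symm
      · rcases hq with h | h
        · have h' := congrArg w h
          rw [hrev, hwe] at h'
          rw [← hcast q hqlt] at h'
          have hle2 : q ≤ S.att - q := by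
            by_contra hgt
            push_neg at hgt
            exact hmin _ hgt (Or.inr h')
          rcases Nat.lt_or_ge (2 * q) S.att with hfin | hfin
          · exact hfin
          · exfalso
            have he2 : S.att - q = q := by omega
            rw [he2, h] at h'
            exact hinj2 e h'
        · have h' := congrArg w h
          rw [hrev, hwe, neg_neg] at h'
          rw [← hcast q hqlt] at h'
          have hle2 : q ≤ S.att - q := by
            by_contra hgt
            push_neg at hgt
            exact hmin _ hgt (Or.inl h')
          rcases Nat.lt_or_ge (2 * q) S.att with hfin | hfin
          · exact hfin
          · exfalso
            have he2 : S.att - q = q := by omega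
            rw [he2, h] at h'
            exact hinj2 e h'.symm
    -- the automorphism `g` reversing `c`
    obtain ⟨g, hgG, hgv, hg1⟩ := S.O_orbit htail₁ htail₂
    have hgc : ∀ i, g (c.f i) = c.f (-i) := by
      have h0 : (HalfArcAux.mapG S g hgG c).f 0 = (HalfArcAux.rev S c).f 0 := by
        simp [hc, hgv]
      have h1 : (HalfArcAux.mapG S g hgG c).f 1 = (HalfArcAux.rev S c).f 1 := by
        simpa using hg1
      exact uniq _ _ h0 h1
    have himg : S.O (g (c'.f 1)) v := by
      have h := (HalfArcAux.O_iff S hgG (c'.f 1) v).mpr hhead₁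
      rwa [hgv] at h
    have hgc' : (∀ i, g (c'.f i) = c'.f i) ∨ (∀ i, g (c'.f i) = c'.f (-i)) := by
      rcases hin _ himg with hcase | hcase
      · left
        have h0 : (HalfArcAux.mapG S g hgG c').f 0 = c'.f 0 := by simp [hc', hgv]
        have h1 : (HalfArcAux.mapG S g hgG c').f 1 = c'.f 1 := hcase
        exact uniq _ _ h0 h1
      · right
        have h0 : (HalfArcAux.mapG S g hgG c').f 0 = (HalfArcAux.rev S c').f 0 := by
          simp [hc', hgv]
        have h1 : (HalfArcAux.mapG S g hgG c').f 1 = (HalfArcAux.rev S c').f 1 := by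
          simpa using hcase
        exact uniq _ _ h0 h1
    -- the automorphism `w` reversing `c'`
    obtain ⟨w, hwG, hw1, hwv⟩ := S.O_orbit hhead₁ hhead₂
    have hwc' : ∀ i, w (c'.f i) = c'.f (-i) := by
      have h0 : (HalfArcAux.mapG S w hwG c').f 0 = (HalfArcAux.rev S c').f 0 := by
        simp [hc', hwv]
      have h1 : (HalfArcAux.mapG S w hwG c').f 1 = (HalfArcAux.rev S c').f 1 := by
        simpa using hw1
      exact uniq _ _ h0 h1
    have himg2 : S.O v (w (c.f 1)) := by
      have h := (HalfArcAux.O_iff S hwG v (c.f 1)).mpr htail₁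
      rwa [hwv] at h
    have hwc : (∀ i, w (c.f i) = c.f i) ∨ (∀ i, w (c.f i) = c.f (-i)) := by
      rcases hout _ himg2 with hcase | hcase
      · left
        have h0 : (HalfArcAux.mapG S w hwG c).f 0 = c.f 0 := by simp [hc, hwv]
        have h1 : (HalfArcAux.mapG S w hwG c).f 1 = c.f 1 := hcase
        exact uniq _ _ h0 h1
      · right
        have h0 : (HalfArcAux.mapG S w hwG c).f 0 = (HalfArcAux.rev S c).f 0 := by
          simp [hc, hwv]
        have h1 : (HalfArcAux.mapG S w hwG c).f 1 = (HalfArcAux.rev S c).f 1 := by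
          simpa using hcase
        exact uniq _ _ h0 h1
    exact ⟨finish c c' qt g hgc hgc' hqt hqt_min hqtlt,
      finish c' c qh w hwc' hwc hqh hqh_min hqhlt⟩
  · -- the case `att = 2`
    intro ha2
    obtain ⟨hqtpos, hqtlt⟩ := gen (by omega) c c' qt hc hc' hqt hqt_min
    obtain ⟨hqhpos, hqhlt⟩ := gen (by omega) c' c qh hc' hc hqh hqh_min
    have hx1 : qt = 1 := by omega
    have hx2 : qh = 1 := by omega
    have hx3 : 1 = S.att / 2 := by rw [ha2]
    exact ⟨hx1, hx2, hx3⟩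
end

section
/- Let Γ be a tetravalent G-half-arc-transitive graph for some G ≤ Aut(Γ), let C be a G-alternating cycle, let u be a vertex of C, and let s and B_s(C;u) be as defined. Then B_s(C;u) is a block of imprimitivity for the action of G on the vertex set of Γ. -/
/-! Common definitions for tetravalent half-arc-transitive graph theory. -/

open SimpleGraph Set

namespace HalfArc

variable {V W : Type*}

section Generic

variable {V : Type*} {Γ : SimpleGraph V} {O : V → V → Prop} {n : ℕ}

lemma mem_cycEdges (c : AltCycle Γ O n) (i : ZMod n) :
    s(c.f i, c.f (i + 1)) ∈ cycEdges c := ⟨i, rfl⟩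

lemma mem_cycVerts (c : AltCycle Γ O n) (i : ZMod n) : c.f i ∈ cycVerts c := ⟨i, rfl⟩

lemma supp_cycEdges (c : AltCycle Γ O n) : suppOf (cycEdges c) = cycVerts c := by
  ext x
  constructor
  · rintro ⟨e, ⟨i, rfl⟩, hx⟩
    rcases Sym2.mem_iff.mp hx with h | h
    · exact ⟨i, h.symm⟩
    · exact ⟨i + 1, h.symm⟩
  · rintro ⟨i, rfl⟩
    exact ⟨s(c.f i, c.f (i + 1)), mem_cycEdges c i, Sym2.mem_mk_left _ _⟩

lemma edge_endpoint {c : AltCycle Γ O n} {e : Sym2 V} (he : e ∈ cycEdges c)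
    (t : ZMod n) (x : V) (hex : e = s(c.f t, x)) :
    x = c.f (t + 1) ∨ x = c.f (t - 1) := by
  obtain ⟨i, rfl⟩ := he
  rw [Sym2.eq_iff] at hex
  rcases hex with ⟨h1, h2⟩ | ⟨h1, h2⟩
  · left; rw [← h2, c.inj h1]
  · right
    have hi : i = t - 1 := eq_sub_of_add_eq (c.inj h2)
    rw [← h1, hi]

end Generic

section SetupLemmas

variable {V : Type*}

lemma O_iff (S : Setup V) {g : S.Γ ≃g S.Γ} (hg : g ∈ S.G) (u v : V) :
    S.O (g u) (g v) ↔ S.O u v := by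
  constructor
  · intro h
    have h2 := S.O_inv g⁻¹ (S.G.inv_mem hg) h
    have e1 : (g⁻¹ : S.Γ ≃g S.Γ) (g u) = u := g.toEquiv.symm_apply_apply u
    have e2 : (g⁻¹ : S.Γ ≃g S.Γ) (g v) = v := g.toEquiv.symm_apply_apply v
    rwa [e1, e2] at h2
  · exact fun h => S.O_inv g hg h

/-- The image of an alternating cycle under an automorphism in `G`. -/
def mapCycle (S : Setup V) {g : S.Γ ≃g S.Γ} (hg : g ∈ S.G)
    (c : AltCycle S.Γ S.O (2 * S.r)) : AltCycle S.Γ S.O (2 * S.r) where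
  f := fun i => g (c.f i)
  inj := fun a b h => c.inj (g.toEquiv.injective h)
  adj := fun i => g.map_rel_iff.mpr (c.adj i)
  alt := fun i => by rw [O_iff S hg, O_iff S hg]; exact c.alt i

lemma mapCycle_f (S : Setup V) {g : S.Γ ≃g S.Γ} (hg : g ∈ S.G)
    (c : AltCycle S.Γ S.O (2 * S.r)) (i : ZMod (2 * S.r)) :
    (mapCycle S hg c).f i = g (c.f i) := rfl

lemma cycEdges_mapCycle (S : Setup V) {g : S.Γ ≃g S.Γ} (hg : g ∈ S.G)
    (c : AltCycle S.Γ S.O (2 * S.r)) :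
    cycEdges (mapCycle S hg c) = Sym2.map (g : V → V) '' cycEdges c := by
  ext e
  constructor
  · rintro ⟨i, rfl⟩
    exact ⟨s(c.f i, c.f (i + 1)), ⟨i, rfl⟩, by simp [mapCycle, Sym2.map_pair_eq]⟩
  · rintro ⟨e', ⟨i, rfl⟩, rfl⟩
    exact ⟨i, by simp [mapCycle, Sym2.map_pair_eq]⟩

lemma suppOf_map {g : V ≃ V} {E : Set (Sym2 V)} :
    suppOf (Sym2.map (g : V → V) '' E) = (g : V → V) '' suppOf E := by
  ext x
  constructor
  · rintro ⟨e, ⟨e', he', rfl⟩, hx⟩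
    obtain ⟨a, ha, rfl⟩ := Sym2.mem_map.mp hx
    exact ⟨a, ⟨e', he', ha⟩, rfl⟩
  · rintro ⟨a, ⟨e', he', ha⟩, rfl⟩
    exact ⟨Sym2.map g e', ⟨e', he', rfl⟩, Sym2.mem_map.mpr ⟨a, ha, rfl⟩⟩

lemma map_map_inv (S : Setup V) (g : S.Γ ≃g S.Γ) (E : Set (Sym2 V)) :
    Sym2.map ((g⁻¹ : S.Γ ≃g S.Γ) : V → V) '' (Sym2.map (g : V → V) '' E) = E := by
  rw [← Set.image_comp]
  have h : Sym2.map ((g⁻¹ : S.Γ ≃g S.Γ) : V → V) ∘ Sym2.map (g : V → V) = id := by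
    funext e
    rw [Function.comp_apply, Sym2.map_map]
    have h1 : ((g⁻¹ : S.Γ ≃g S.Γ) : V → V) ∘ (g : V → V) = id := by
      funext v
      exact g.toEquiv.symm_apply_apply v
    rw [h1, Sym2.map_id]
  rw [h, Set.image_id]

lemma map_inv_map (S : Setup V) (g : S.Γ ≃g S.Γ) (E : Set (Sym2 V)) :
    Sym2.map ((g : S.Γ ≃g S.Γ) : V → V) '' (Sym2.map ((g⁻¹ : S.Γ ≃g S.Γ) : V → V) '' E) = E := by
  rw [← Set.image_comp]
  have h : Sym2.map ((g : S.Γ ≃g S.Γ) : V → V) ∘ Sym2.map ((g⁻¹ : S.Γ ≃g S.Γ) : V → V) = id := by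
    funext e
    rw [Function.comp_apply, Sym2.map_map]
    have h1 : ((g : S.Γ ≃g S.Γ) : V → V) ∘ ((g⁻¹ : S.Γ ≃g S.Γ) : V → V) = id := by
      funext v
      exact g.toEquiv.apply_symm_apply v
    rw [h1, Sym2.map_id]
  rw [h, Set.image_id]

lemma isAltEdgeSet_map (S : Setup V) {g : S.Γ ≃g S.Γ} (hg : g ∈ S.G)
    {E : Set (Sym2 V)} (hE : IsAltEdgeSet S.Γ S.O (2 * S.r) E) :
    IsAltEdgeSet S.Γ S.O (2 * S.r) (Sym2.map (g : V → V) '' E) := by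
  obtain ⟨c, rfl⟩ := hE
  exact ⟨mapCycle S hg c, cycEdges_mapCycle S hg c⟩

/-- The set of `G`-alternating cycles (as edge sets) through a given vertex. -/
def CyclesThru (S : Setup V) (v : V) : Set (Set (Sym2 V)) :=
  {E : Set (Sym2 V) | IsAltEdgeSet S.Γ S.O (2 * S.r) E ∧ v ∈ suppOf E}

lemma cyclesThru_pair (S : Setup V) (v : V) :
    ∃ E1 E2, E1 ≠ E2 ∧ CyclesThru S v = {E1, E2} :=
  Set.ncard_eq_two.mp (S.alt_cover v)

lemma mem_image_equiv {g : V ≃ V} {A : Set V} {x : V} :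
    x ∈ (g : V → V) '' A ↔ g.symm x ∈ A := by
  constructor
  · rintro ⟨a, ha, rfl⟩; rwa [g.symm_apply_apply]
  · intro h; exact ⟨g.symm x, h, g.apply_symm_apply x⟩

lemma cyclesThru_map (S : Setup V) {g : S.Γ ≃g S.Γ} (hg : g ∈ S.G) (v : V)
    {E : Set (Sym2 V)} (hE : E ∈ CyclesThru S v) :
    Sym2.map (g : V → V) '' E ∈ CyclesThru S (g v) := by
  refine ⟨isAltEdgeSet_map S hg hE.1, ?_⟩
  rw [show (g : V → V) = (g.toEquiv : V → V) from rfl, suppOf_map]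
  exact ⟨v, hE.2, rfl⟩

lemma pair_subset_pair {α : Type*} {a b x y : α} (hab : a ≠ b)
    (h : ({a, b} : Set α) ⊆ {x, y}) : ({x, y} : Set α) = {a, b} := by
  have ha : a = x ∨ a = y := by simpa using h (show a ∈ ({a, b} : Set α) by simp)
  have hb : b = x ∨ b = y := by simpa using h (show b ∈ ({a, b} : Set α) by simp)
  ext z
  simp only [Set.mem_insert_iff, Set.mem_singleton_iff]
  rcases ha with rfl | rfl <;> rcases hb with rfl | rfl <;> tauto

/-- The attachment set containing a vertex `v`. -/
def AttOf (S : Setup V) (v : V) : Set V := {w | ∀ E ∈ CyclesThru S v, w ∈ suppOf E}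

lemma mem_attOf_self (S : Setup V) (v : V) : v ∈ AttOf S v := fun _ hE => hE.2

lemma attOf_subset (S : Setup V) {v : V} {E : Set (Sym2 V)} (hE : E ∈ CyclesThru S v) :
    AttOf S v ⊆ suppOf E := fun _ hw => hw E hE

lemma cyclesThru_eq_of_mem (S : Setup V) {v w : V} (hw : w ∈ AttOf S v) :
    CyclesThru S w = CyclesThru S v := by
  obtain ⟨E1, E2, h12, hv⟩ := cyclesThru_pair S v
  obtain ⟨F1, F2, hF, hwp⟩ := cyclesThru_pair S w
  have hsub : CyclesThru S v ⊆ CyclesThru S w := fun E hE => ⟨hE.1, hw E hE⟩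
  rw [hv, hwp] at hsub ⊢
  exact pair_subset_pair h12 hsub

lemma attOf_eq_of_mem (S : Setup V) {v w : V} (hw : w ∈ AttOf S v) :
    AttOf S w = AttOf S v := by
  unfold AttOf
  rw [cyclesThru_eq_of_mem S hw]

lemma mem_suppOf_map (S : Setup V) (g : S.Γ ≃g S.Γ) (E : Set (Sym2 V)) (x : V) :
    g x ∈ suppOf (Sym2.map (g : V → V) '' E) ↔ x ∈ suppOf E := by
  rw [show (g : V → V) = (g.toEquiv : V → V) from rfl, suppOf_map, mem_image_equiv,
    g.toEquiv.symm_apply_apply]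

lemma attOf_map (S : Setup V) {g : S.Γ ≃g S.Γ} (hg : g ∈ S.G) (v : V) :
    (g : V → V) '' AttOf S v = AttOf S (g v) := by
  apply Set.Subset.antisymm
  · rintro _ ⟨w, hw, rfl⟩
    intro F hF
    have hE : Sym2.map ((g⁻¹ : S.Γ ≃g S.Γ) : V → V) '' F ∈ CyclesThru S v := by
      have h := cyclesThru_map S (S.G.inv_mem hg) (g v) hF
      rwa [show (g⁻¹ : S.Γ ≃g S.Γ) (g v) = v from g.toEquiv.symm_apply_apply v] at h
    have hw2 := hw _ hE
    have h4 := (mem_suppOf_map S g _ w).mpr hw2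
    rwa [map_inv_map S g F] at h4
  · intro x hx
    refine ⟨(g⁻¹ : S.Γ ≃g S.Γ) x, ?_, g.toEquiv.apply_symm_apply x⟩
    intro E hE
    have hF := cyclesThru_map S hg v hE
    have h2 := hx _ hF
    have h3 : g ((g⁻¹ : S.Γ ≃g S.Γ) x) = x := g.toEquiv.apply_symm_apply x
    rw [← h3] at h2
    exact (mem_suppOf_map S g E _).mp h2

lemma mem_attOf_map (S : Setup V) {g : S.Γ ≃g S.Γ} (hg : g ∈ S.G) (v x : V) :
    g x ∈ AttOf S (g v) ↔ x ∈ AttOf S v := by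
  rw [← attOf_map S hg v]
  constructor
  · intro h
    obtain ⟨y, hy, hxy⟩ := h
    rwa [← g.toEquiv.injective hxy]
  · exact fun h => ⟨x, h, rfl⟩

lemma attOf_eq_inter (S : Setup V) (v : V) :
    ∃ c c' : AltCycle S.Γ S.O (2 * S.r), cycEdges c ≠ cycEdges c' ∧
      AttOf S v = cycVerts c ∩ cycVerts c' := by
  obtain ⟨E1, E2, h12, hv⟩ := cyclesThru_pair S v
  have hE1 : E1 ∈ CyclesThru S v := by rw [hv]; exact Set.mem_insert _ _
  have hE2 : E2 ∈ CyclesThru S v := by rw [hv]; simp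
  obtain ⟨c, hc⟩ := hE1.1
  obtain ⟨c', hc'⟩ := hE2.1
  refine ⟨c, c', by rw [hc, hc']; exact h12, ?_⟩
  ext w
  constructor
  · intro hw
    exact ⟨(supp_cycEdges c) ▸ (hc ▸ hw E1 hE1), (supp_cycEdges c') ▸ (hc' ▸ hw E2 hE2)⟩
  · rintro ⟨hw1, hw2⟩ E hE
    rw [hv] at hE
    rcases hE with rfl | hE
    · rw [← hc, supp_cycEdges]; exact hw1
    · rw [Set.mem_singleton_iff] at hE
      subst hE
      rw [← hc', supp_cycEdges]
      exact hw2

lemma attOf_ncard (S : Setup V) (v : V) : (AttOf S v).ncard = S.att := by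
  obtain ⟨c, c', hne, heq⟩ := attOf_eq_inter S v
  apply S.att_eq
  refine ⟨c, c', hne, ⟨v, ?_⟩, heq⟩
  rw [← heq]
  exact mem_attOf_self S v

lemma r_ge_two (S : Setup V) : 2 ≤ S.r := by
  by_contra hcon
  have hr : S.r = 1 := by have := S.r_pos; omega
  obtain ⟨v⟩ := S.conn.nonempty
  have hcov := S.alt_cover v
  have h2 : 2 * S.r = 2 := by omega
  rw [h2] at hcov
  have hz : ∀ i : ZMod 2, i = 0 ∨ i = 1 := by decide
  have key : ∀ w ∈ S.Γ.neighborSet v, ({s(v, w)} : Set (Sym2 V)) ∈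
      {E : Set (Sym2 V) | IsAltEdgeSet S.Γ S.O 2 E ∧ v ∈ suppOf E} := by
    intro w hw
    have hadj : S.Γ.Adj v w := hw
    have hne : v ≠ w := hadj.ne
    have hc : ∃ c : AltCycle S.Γ S.O 2, cycEdges c = {s(v, w)} := by
      refine ⟨⟨fun i => if i = 0 then v else w, ?_, ?_, ?_⟩, ?_⟩
      · intro a b hab
        rcases hz a with rfl | rfl <;> rcases hz b with rfl | rfl <;> simp_all
      · intro i
        rcases hz i with rfl | rfl
        · simpa using hadj
        · have h11 : (1 + 1 : ZMod 2) = 0 := by decide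
          simpa [h11] using hadj.symm
      · intro i
        have h22 : i + 2 = i := by
          have : (2 : ZMod 2) = 0 := by decide
          rw [this, add_zero]
        rw [h22]
      · ext e
        constructor
        · rintro ⟨j, rfl⟩
          rcases hz j with rfl | rfl
          · simp
          · have h11 : (1 + 1 : ZMod 2) = 0 := by decide
            simp only [h11]
            simp [Sym2.eq_swap]
        · rintro rfl
          exact ⟨0, by simp⟩
    exact ⟨hc, s(v, w), rfl, Sym2.mem_mk_left _ _⟩
  set T := {E : Set (Sym2 V) | IsAltEdgeSet S.Γ S.O 2 E ∧ v ∈ suppOf E} with hT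
  have hTfin : T.Finite := by
    obtain ⟨A, B, hAB, hset⟩ := Set.ncard_eq_two.mp hcov
    rw [hset]
    exact (Set.finite_singleton B).insert A
  have hinj : Set.InjOn (fun w => ({s(v, w)} : Set (Sym2 V))) (S.Γ.neighborSet v) := by
    intro w1 h1 w2 h2 he
    simp only [Set.singleton_eq_singleton_iff, Sym2.eq_iff] at he
    rcases he with ⟨-, h⟩ | ⟨h, h'⟩
    · exact h
    · exact h'.trans h
  have hsub : (fun w => ({s(v, w)} : Set (Sym2 V))) '' (S.Γ.neighborSet v) ⊆ T := by
    rintro _ ⟨w, hw, rfl⟩; exact key w hw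
  have hle := Set.ncard_le_ncard hsub hTfin
  rw [Set.ncard_image_of_injOn hinj, S.tetra v, hcov] at hle
  omega

lemma nezero_n (S : Setup V) : NeZero (2 * S.r) := ⟨by have := S.r_pos; omega⟩

lemma two_ne_zero_zmod (S : Setup V) : (2 : ZMod (2 * S.r)) ≠ 0 := by
  intro h
  have h2 : ((2 : ℕ) : ZMod (2 * S.r)) = 0 := by exact_mod_cast h
  have hd := (ZMod.natCast_eq_zero_iff 2 (2 * S.r)).mp h2
  have hle := Nat.le_of_dvd (by norm_num) hd
  have := r_ge_two S
  omega

/-- `tOf S c i` : the edge from position `i` to `i+1` of `c` is oriented forwards. -/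
def tOf (S : Setup V) (c : AltCycle S.Γ S.O (2 * S.r)) (i : ZMod (2 * S.r)) : Prop :=
  S.O (c.f i) (c.f (i + 1))

lemma tOf_succ (S : Setup V) (c : AltCycle S.Γ S.O (2 * S.r)) (i : ZMod (2 * S.r)) :
    tOf S c (i + 1) ↔ ¬ tOf S c i := by
  have halt := c.alt i
  have e1 : i + 1 + 1 = i + 2 := by ring
  have hadj : S.Γ.Adj (c.f (i + 1)) (c.f (i + 2)) := by
    have := c.adj (i + 1); rwa [e1] at this
  have hch := S.O_choice hadj
  unfold tOf
  rw [e1, hch]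
  tauto

lemma tOf_add_nat (S : Setup V) (c : AltCycle S.Γ S.O (2 * S.r)) (k : ZMod (2 * S.r)) :
    ∀ m : ℕ, tOf S c (k + m) ↔ (Even m ↔ tOf S c k) := by
  intro m
  induction m with
  | zero =>
    simp only [Nat.cast_zero, add_zero, Even.zero]
    tauto
  | succ m ih =>
    have e1 : k + ((m + 1 : ℕ) : ZMod (2 * S.r)) = (k + m) + 1 := by push_cast; ring
    rw [e1, tOf_succ, ih, Nat.even_add_one]
    tauto

/-- `w` is the tail of both of its edges in `E`. -/
def TailOn (S : Setup V) (E : Set (Sym2 V)) (w : V) : Prop :=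
  ∀ x, s(w, x) ∈ E → S.O w x

lemma tailOn_iff (S : Setup V) (c : AltCycle S.Γ S.O (2 * S.r)) (m : ZMod (2 * S.r)) :
    TailOn S (cycEdges c) (c.f m) ↔ tOf S c m := by
  constructor
  · intro h
    exact h (c.f (m + 1)) (mem_cycEdges c m)
  · intro h x hx
    rcases edge_endpoint hx m x rfl with rfl | rfl
    · exact h
    · have e1 : (m - 1) + 1 = m := by ring
      have hsucc := tOf_succ S c (m - 1)
      rw [e1] at hsucc
      have hnt : ¬ tOf S c (m - 1) := hsucc.mp h
      have hadj : S.Γ.Adj (c.f m) (c.f (m - 1)) := by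
        have := (c.adj (m - 1)).symm; rwa [e1] at this
      rw [S.O_choice hadj]
      intro hO
      apply hnt
      unfold tOf
      rwa [e1]

lemma tailOn_map (S : Setup V) {g : S.Γ ≃g S.Γ} (hg : g ∈ S.G) (E : Set (Sym2 V)) (w : V) :
    TailOn S (Sym2.map (g : V → V) '' E) (g w) ↔ TailOn S E w := by
  constructor
  · intro h x hx
    have hmem : s(g w, g x) ∈ Sym2.map (g : V → V) '' E := by
      exact ⟨s(w, x), hx, by simp [Sym2.map_pair_eq]⟩
    exact (O_iff S hg w x).mp (h (g x) hmem)
  · rintro h x ⟨e, he, hemap⟩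
    have h1 : Sym2.map ((g⁻¹ : S.Γ ≃g S.Γ) : V → V) (Sym2.map (g : V → V) e) = e := by
      rw [Sym2.map_map]
      have : ((g⁻¹ : S.Γ ≃g S.Γ) : V → V) ∘ (g : V → V) = id := by
        funext v; exact g.toEquiv.symm_apply_apply v
      rw [this, Sym2.map_id, id]
    have hw : (g⁻¹ : S.Γ ≃g S.Γ) (g w) = w := g.toEquiv.symm_apply_apply w
    have h2 : e = s(w, (g⁻¹ : S.Γ ≃g S.Γ) x) := by
      rw [← h1, hemap, Sym2.map_pair_eq, hw]
    have h3 := h _ (h2 ▸ he)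
    have h4 := S.O_inv g hg h3
    have hx : g ((g⁻¹ : S.Γ ≃g S.Γ) x) = x := g.toEquiv.apply_symm_apply x
    rwa [hx] at h4

lemma exists_O (S : Setup V) (c : AltCycle S.Γ S.O (2 * S.r)) : ∃ p q, S.O p q := by
  by_cases h : tOf S c 0
  · exact ⟨_, _, h⟩
  · refine ⟨c.f (0 + 1), c.f 0, ?_⟩
    have := S.O_choice ((c.adj 0).symm)
    rw [this]
    intro h2
    exact h h2

lemma not_all_out (S : Setup V) (hO : ∃ p q, S.O p q) (w : V)
    (h : ∀ x, S.Γ.Adj w x → S.O w x) : False := by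
  obtain ⟨p, q, hpq⟩ := hO
  obtain ⟨g, hg, hgw⟩ := S.hat.1 w q
  have hgx : g ((g⁻¹ : S.Γ ≃g S.Γ) p) = p := g.toEquiv.apply_symm_apply p
  have hadjwx : S.Γ.Adj w ((g⁻¹ : S.Γ ≃g S.Γ) p) := by
    apply g.map_rel_iff.mp
    rw [hgw, hgx]
    exact (S.O_adj hpq).symm
  have h5 := S.O_inv g hg (h _ hadjwx)
  rw [hgw, hgx] at h5
  exact (S.O_choice (S.O_adj hpq)).mp hpq h5

lemma not_all_in (S : Setup V) (hO : ∃ p q, S.O p q) (w : V)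
    (h : ∀ x, S.Γ.Adj w x → S.O x w) : False := by
  obtain ⟨p, q, hpq⟩ := hO
  obtain ⟨g, hg, hgw⟩ := S.hat.1 w p
  have hgx : g ((g⁻¹ : S.Γ ≃g S.Γ) q) = q := g.toEquiv.apply_symm_apply q
  have hadjwx : S.Γ.Adj w ((g⁻¹ : S.Γ ≃g S.Γ) q) := by
    apply g.map_rel_iff.mp
    rw [hgw, hgx]
    exact S.O_adj hpq
  have h5 := S.O_inv g hg (h _ hadjwx)
  rw [hgw, hgx] at h5
  exact (S.O_choice (S.O_adj hpq)).mp hpq h5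

lemma edge_covered (S : Setup V) (c0 : AltCycle S.Γ S.O (2 * S.r)) {x y : V}
    (hxy : S.Γ.Adj x y) :
    ∃ E, IsAltEdgeSet S.Γ S.O (2 * S.r) E ∧ s(x, y) ∈ E := by
  have he : S.Γ.Adj (c0.f 0) (c0.f (0 + 1)) := c0.adj 0
  obtain ⟨g, hg, hcase⟩ := S.hat.2.1 he hxy
  refine ⟨Sym2.map (g : V → V) '' cycEdges c0, isAltEdgeSet_map S hg ⟨c0, rfl⟩, ?_⟩
  refine ⟨s(c0.f 0, c0.f (0 + 1)), mem_cycEdges c0 0, ?_⟩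
  rw [Sym2.map_pair_eq]
  rcases hcase with ⟨h1, h2⟩ | ⟨h1, h2⟩
  · rw [h1, h2]
  · rw [h1, h2, Sym2.eq_swap]

lemma edge_unique (S : Setup V) {E1 E2 : Set (Sym2 V)}
    (h1 : IsAltEdgeSet S.Γ S.O (2 * S.r) E1) (h2 : IsAltEdgeSet S.Γ S.O (2 * S.r) E2)
    {e : Sym2 V} (he1 : e ∈ E1) (he2 : e ∈ E2) : E1 = E2 := by
  by_contra hne
  obtain ⟨c1, hc1⟩ := h1
  subst hc1
  obtain ⟨i, rfl⟩ := he1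
  set x := c1.f i with hx
  set y := c1.f (i + 1) with hy
  have hxyadj : S.Γ.Adj x y := c1.adj i
  -- every edge lies on two distinct alternating cycles
  have main : ∀ x' y', S.Γ.Adj x' y' → ∃ F1 F2 : Set (Sym2 V), F1 ≠ F2 ∧
      IsAltEdgeSet S.Γ S.O (2 * S.r) F1 ∧ IsAltEdgeSet S.Γ S.O (2 * S.r) F2 ∧
      s(x', y') ∈ F1 ∧ s(x', y') ∈ F2 := by
    intro x' y' hadj'
    obtain ⟨g, hg, hcase⟩ := S.hat.2.1 hxyadj hadj'
    refine ⟨Sym2.map (g : V → V) '' cycEdges c1, Sym2.map (g : V → V) '' E2, ?_,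
      isAltEdgeSet_map S hg ⟨c1, rfl⟩, isAltEdgeSet_map S hg h2, ?_, ?_⟩
    · intro hcon
      apply hne
      have := congrArg (fun A => Sym2.map ((g⁻¹ : S.Γ ≃g S.Γ) : V → V) '' A) hcon
      simpa only [map_map_inv] using this
    · refine ⟨s(x, y), ⟨i, rfl⟩, ?_⟩
      rw [Sym2.map_pair_eq]
      rcases hcase with ⟨ha, hb⟩ | ⟨ha, hb⟩
      · rw [ha, hb]
      · rw [ha, hb, Sym2.eq_swap]
    · refine ⟨s(x, y), he2, ?_⟩
      rw [Sym2.map_pair_eq]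
      rcases hcase with ⟨ha, hb⟩ | ⟨ha, hb⟩
      · rw [ha, hb]
      · rw [ha, hb, Sym2.eq_swap]
  -- hence all four edges at x lie on a single alternating cycle
  obtain ⟨A1, A2, hA12, hpair⟩ := cyclesThru_pair S x
  have hA1mem : A1 ∈ CyclesThru S x := by rw [hpair]; exact Set.mem_insert _ _
  have hall : ∀ w ∈ S.Γ.neighborSet x, s(x, w) ∈ A1 := by
    intro w hw
    have hadjw : S.Γ.Adj x w := hw
    obtain ⟨F1, F2, hF, hFa1, hFa2, hm1, hm2⟩ := main x w hadjw
    have hF1 : F1 ∈ CyclesThru S x := ⟨hFa1, s(x, w), hm1, Sym2.mem_mk_left _ _⟩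
    have hF2 : F2 ∈ CyclesThru S x := ⟨hFa2, s(x, w), hm2, Sym2.mem_mk_left _ _⟩
    have hsub : ({F1, F2} : Set (Set (Sym2 V))) ⊆ {A1, A2} := by
      rw [← hpair]
      rintro F (rfl | hFm)
      · exact hF1
      · rw [Set.mem_singleton_iff] at hFm; subst hFm; exact hF2
    have heq := pair_subset_pair hF hsub
    have : A1 ∈ ({F1, F2} : Set (Set (Sym2 V))) := by rw [← heq]; exact Set.mem_insert _ _
    rcases this with rfl | hmm
    · exact hm1
    · rw [Set.mem_singleton_iff] at hmm; subst hmm; exact hm2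
  obtain ⟨d, hd⟩ := hA1mem.1
  have hxv : x ∈ cycVerts d := by
    rw [← supp_cycEdges, hd]
    exact hA1mem.2
  obtain ⟨m, hm⟩ := hxv
  have hnsub : S.Γ.neighborSet x ⊆ {d.f (m + 1), d.f (m - 1)} := by
    intro w hw
    have hmem : s(x, w) ∈ cycEdges d := by rw [hd]; exact hall w hw
    have := edge_endpoint hmem m w (by rw [hm])
    rcases this with h | h
    · exact Set.mem_insert_iff.mpr (Or.inl h)
    · exact Set.mem_insert_iff.mpr (Or.inr h)
  have hle := Set.ncard_le_ncard hnsub (Set.toFinite _)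
  rw [S.tetra x] at hle
  have : ({d.f (m + 1), d.f (m - 1)} : Set V).ncard ≤ 2 := by
    apply (Set.ncard_insert_le _ _).trans
    simp [Set.ncard_singleton]
  omega

lemma headOn_of_not_tOf (S : Setup V) (c : AltCycle S.Γ S.O (2 * S.r)) (m : ZMod (2 * S.r))
    (hnt : ¬ tOf S c m) : ∀ x, s(c.f m, x) ∈ cycEdges c → S.O x (c.f m) := by
  intro x hx
  rcases edge_endpoint hx m x rfl with rfl | rfl
  · have hch := S.O_choice (c.adj m)
    unfold tOf at hnt
    tauto
  · have e1 : (m - 1) + 1 = m := by ring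
    have hsucc := tOf_succ S c (m - 1)
    rw [e1] at hsucc
    have ht : tOf S c (m - 1) := by tauto
    unfold tOf at ht
    rwa [e1] at ht

lemma tailOn_xor (S : Setup V) {w : V} {E1 E2 : Set (Sym2 V)} (h12 : E1 ≠ E2)
    (hE1 : E1 ∈ CyclesThru S w) (hE2 : E2 ∈ CyclesThru S w) :
    TailOn S E1 w ↔ ¬ TailOn S E2 w := by
  obtain ⟨c1, hc1⟩ := hE1.1
  obtain ⟨c2, hc2⟩ := hE2.1
  obtain ⟨m1, hm1⟩ : ∃ m1, c1.f m1 = w := by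
    have := hE1.2; rw [← hc1, supp_cycEdges] at this; exact this
  obtain ⟨m2, hm2⟩ : ∃ m2, c2.f m2 = w := by
    have := hE2.2; rw [← hc2, supp_cycEdges] at this; exact this
  obtain ⟨A1, A2, hA, hpair⟩ := cyclesThru_pair S w
  have hsub : ({E1, E2} : Set (Set (Sym2 V))) ⊆ {A1, A2} := by
    rw [← hpair]
    rintro F (rfl | hF)
    · exact hE1
    · rw [Set.mem_singleton_iff] at hF; subst hF; exact hE2
  have hCthru : CyclesThru S w = {E1, E2} := hpair.trans (pair_subset_pair h12 hsub)
  have hedge : ∀ x, S.Γ.Adj w x → s(w, x) ∈ E1 ∨ s(w, x) ∈ E2 := by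
    intro x hx
    obtain ⟨E, hEalt, hmem⟩ := edge_covered S c1 hx
    have hEC : E ∈ CyclesThru S w := ⟨hEalt, ⟨s(w, x), hmem, Sym2.mem_mk_left _ _⟩⟩
    rw [hCthru] at hEC
    rcases hEC with rfl | hEC
    · exact Or.inl hmem
    · rw [Set.mem_singleton_iff] at hEC; subst hEC; exact Or.inr hmem
  by_cases h1 : TailOn S E1 w <;> by_cases h2 : TailOn S E2 w
  · exfalso
    apply not_all_out S (exists_O S c1) w
    intro x hx
    rcases hedge x hx with hm | hm
    · exact h1 x hm
    · exact h2 x hm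
  · tauto
  · tauto
  · exfalso
    apply not_all_in S (exists_O S c1) w
    intro x hx
    have hnt1 : ¬ tOf S c1 m1 := by
      rw [← hm1] at h1
      rwa [← hc1, tailOn_iff] at h1
    have hnt2 : ¬ tOf S c2 m2 := by
      rw [← hm2] at h2
      rwa [← hc2, tailOn_iff] at h2
    rcases hedge x hx with hm | hm
    · have := headOn_of_not_tOf S c1 m1 hnt1 x (by rw [hm1, hc1]; exact hm)
      rwa [hm1] at this
    · have := headOn_of_not_tOf S c2 m2 hnt2 x (by rw [hm2, hc2]; exact hm)
      rwa [hm2] at this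

lemma rigidity (S : Setup V) (c d : AltCycle S.Γ S.O (2 * S.r))
    (hE : cycEdges d = cycEdges c) (k ε : ZMod (2 * S.r)) (hε : ε = 1 ∨ ε = -1)
    (h0 : d.f 0 = c.f k) (h1 : d.f 1 = c.f (k + ε)) :
    ∀ j : ZMod (2 * S.r), d.f j = c.f (k + ε * j) := by
  haveI := nezero_n S
  have hεsq : ε * ε = 1 := by rcases hε with rfl | rfl <;> ring
  have key : ∀ m : ℕ, d.f (m : ZMod (2 * S.r)) = c.f (k + ε * m) ∧
      d.f ((m : ZMod (2 * S.r)) + 1) = c.f (k + ε * ((m : ZMod (2 * S.r)) + 1)) := by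
    intro m
    induction m with
    | zero =>
      constructor
      · simpa using h0
      · simpa using h1
    | succ m ih =>
      obtain ⟨ha, hb⟩ := ih
      have hcast : ((m + 1 : ℕ) : ZMod (2 * S.r)) = (m : ZMod (2 * S.r)) + 1 := by push_cast; ring
      constructor
      · rw [hcast]; exact hb
      · rw [hcast]
        set t : ZMod (2 * S.r) := k + ε * ((m : ZMod (2 * S.r)) + 1) with ht
        have hmem : s(d.f ((m : ZMod (2 * S.r)) + 1), d.f ((m : ZMod (2 * S.r)) + 1 + 1)) ∈
            cycEdges c := by rw [← hE]; exact mem_cycEdges d _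
        have hend := edge_endpoint hmem t (d.f ((m : ZMod (2 * S.r)) + 1 + 1)) (by rw [hb])
        have hne2 : d.f ((m : ZMod (2 * S.r)) + 1 + 1) ≠ c.f (k + ε * (m : ZMod (2 * S.r))) := by
          rw [← ha]
          intro hcon
          have hinj := d.inj hcon
          have h2 : (2 : ZMod (2 * S.r)) = 0 := by linear_combination hinj
          exact two_ne_zero_zmod S h2
        have hgoal : d.f ((m : ZMod (2 * S.r)) + 1 + 1) = c.f (t + ε) := by
          rcases hε with rfl | rfl
          · rcases hend with h | h
            · rwa [show t + 1 = t + (1:ZMod (2*S.r)) from rfl] at h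
            · exfalso; apply hne2; rw [h]; congr 1; rw [ht]; ring
          · rcases hend with h | h
            · exfalso; apply hne2; rw [h]; congr 1; rw [ht]; ring
            · rwa [show t - 1 = t + (-1 : ZMod (2*S.r)) from sub_eq_add_neg t 1] at h
        rw [hgoal]
        congr 1
        rw [ht]
        ring
  intro j
  have hj : ((j.val : ℕ) : ZMod (2 * S.r)) = j := ZMod.natCast_zmod_val j
  rw [← hj]
  exact (key j.val).1

lemma exists_rot2 (S : Setup V) (c : AltCycle S.Γ S.O (2 * S.r)) :
    ∃ g : S.Γ ≃g S.Γ, g ∈ S.G ∧ ∀ j, (g : V → V) (c.f j) = c.f (j + 2) := by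
  have h2cast : ((2 : ℕ) : ZMod (2 * S.r)) = 2 := by push_cast; ring
  have htwo : tOf S c ((0 : ZMod (2 * S.r)) + (2:ℕ)) ↔ tOf S c 0 := by
    rw [tOf_add_nat]
    constructor
    · intro h; exact h.mp (by norm_num)
    · intro h; exact ⟨fun _ => h, fun _ => by norm_num⟩
  have h02 : (0 : ZMod (2 * S.r)) + (2:ℕ) = 2 := by rw [h2cast, zero_add]
  rw [h02] at htwo
  have hkey : ∃ g : S.Γ ≃g S.Γ, g ∈ S.G ∧ g (c.f 0) = c.f 2 ∧ g (c.f (0+1)) = c.f (2+1) := by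
    by_cases h0 : tOf S c 0
    · have h2 : tOf S c 2 := htwo.mpr h0
      obtain ⟨g, hg, hga, hgb⟩ := S.O_orbit h0 h2
      exact ⟨g, hg, hga, hgb⟩
    · have h2 : ¬ tOf S c 2 := fun h => h0 (htwo.mp h)
      have h0' : S.O (c.f (0+1)) (c.f 0) := by
        have := S.O_choice (c.adj 0); unfold tOf at h0; tauto
      have h2' : S.O (c.f (2+1)) (c.f 2) := by
        have := S.O_choice (c.adj 2); unfold tOf at h2; tauto
      obtain ⟨g, hg, hga, hgb⟩ := S.O_orbit h0' h2'
      exact ⟨g, hg, hgb, hga⟩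
  obtain ⟨g, hg, hga, hgb⟩ := hkey
  have hEd : cycEdges (mapCycle S hg c) = cycEdges c := by
    apply edge_unique S ⟨mapCycle S hg c, rfl⟩ ⟨c, rfl⟩
      (e := s(c.f 2, c.f (2+1)))
    · refine ⟨0, ?_⟩
      show s((mapCycle S hg c).f 0, (mapCycle S hg c).f (0 + 1)) = s(c.f 2, c.f (2 + 1))
      rw [mapCycle_f, mapCycle_f, hga, hgb]
    · exact mem_cycEdges c 2
  have hr := rigidity S c (mapCycle S hg c) hEd 2 1 (Or.inl rfl)
    (by rw [mapCycle_f, hga])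
    (by rw [mapCycle_f, show (1 : ZMod (2*S.r)) = 0 + 1 from (zero_add 1).symm, hgb]
        congr 1
        ring)
  refine ⟨g, hg, ?_⟩
  intro j
  have := hr j
  rw [mapCycle_f] at this
  rw [this]
  congr 1
  ring

lemma exists_refl (S : Setup V) (c : AltCycle S.Γ S.O (2 * S.r)) :
    ∃ g : S.Γ ≃g S.Γ, g ∈ S.G ∧ ∀ j, (g : V → V) (c.f j) = c.f (-j) := by
  have hm1 : tOf S c (0 - 1) ↔ ¬ tOf S c 0 := by
    have := tOf_succ S c (0 - 1)
    rw [show (0:ZMod (2*S.r)) - 1 + 1 = 0 by ring] at this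
    tauto
  have hadjm : S.Γ.Adj (c.f (0-1)) (c.f 0) := by
    have := c.adj (0-1)
    rwa [show (0:ZMod (2*S.r)) - 1 + 1 = 0 by ring] at this
  have hkey : ∃ g : S.Γ ≃g S.Γ, g ∈ S.G ∧ g (c.f 0) = c.f 0 ∧ g (c.f (0+1)) = c.f (0-1) := by
    by_cases h0 : tOf S c 0
    · have hdn : S.O (c.f 0) (c.f (0-1)) := by
        have hch := S.O_choice hadjm.symm
        have hnt : ¬ tOf S c (0-1) := by tauto
        unfold tOf at hnt
        rw [show (0:ZMod (2*S.r)) - 1 + 1 = 0 by ring] at hnt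
        tauto
      obtain ⟨g, hg, hga, hgb⟩ := S.O_orbit h0 hdn
      exact ⟨g, hg, hga, hgb⟩
    · have h0' : S.O (c.f (0+1)) (c.f 0) := by
        have := S.O_choice (c.adj 0); unfold tOf at h0; tauto
      have hdn : S.O (c.f (0-1)) (c.f 0) := by
        have ht := hm1.mpr h0
        unfold tOf at ht
        rwa [show (0:ZMod (2*S.r)) - 1 + 1 = 0 by ring] at ht
      obtain ⟨g, hg, hga, hgb⟩ := S.O_orbit h0' hdn
      exact ⟨g, hg, hgb, hga⟩
  obtain ⟨g, hg, hga, hgb⟩ := hkey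
  have hEd : cycEdges (mapCycle S hg c) = cycEdges c := by
    apply edge_unique S ⟨mapCycle S hg c, rfl⟩ ⟨c, rfl⟩
      (e := s(c.f 0, c.f (0-1)))
    · refine ⟨0, ?_⟩
      show s((mapCycle S hg c).f 0, (mapCycle S hg c).f (0 + 1)) = s(c.f 0, c.f (0 - 1))
      rw [mapCycle_f, mapCycle_f, hga, hgb]
    · have := mem_cycEdges c (0-1)
      rwa [show (0:ZMod (2*S.r)) - 1 + 1 = 0 by ring, Sym2.eq_swap] at this
  have hr := rigidity S c (mapCycle S hg c) hEd 0 (-1) (Or.inr rfl)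
    (by rw [mapCycle_f, hga])
    (by rw [mapCycle_f, show (1 : ZMod (2*S.r)) = 0 + 1 from (zero_add 1).symm, hgb]
        congr 1
        ring)
  refine ⟨g, hg, ?_⟩
  intro j
  have := hr j
  rw [mapCycle_f] at this
  rw [this]
  congr 1
  ring

section ZModArith

/-- The set of multiples of `l` in `ZMod n`. -/
def Mults (n l : ℕ) : Set (ZMod n) := {x : ZMod n | ∃ j : ℕ, x = ((l * j : ℕ) : ZMod n)}

lemma mults_mod {n a l : ℕ} (hal : a * l = n) (ha : 0 < a) (j : ℕ) :
    ((l * j : ℕ) : ZMod n) = ((l * (j % a) : ℕ) : ZMod n) := by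
  conv_lhs => rw [show j = a * (j / a) + j % a from (Nat.div_add_mod j a).symm]
  have he : l * (a * (j / a) + j % a) = n * (j / a) + l * (j % a) := by
    rw [← hal]; ring
  rw [he]
  push_cast
  rw [ZMod.natCast_self]
  ring

lemma mults_eq_image {n a l : ℕ} (hn : 0 < n) (hal : a * l = n) :
    Mults n l = (fun j : ℕ => ((l * j : ℕ) : ZMod n)) '' (Set.Iio a) := by
  have ha : 0 < a := by by_contra h; push_neg at h; interval_cases a <;> omega
  ext x
  constructor
  · rintro ⟨j, rfl⟩
    exact ⟨j % a, Nat.mod_lt j ha, (mults_mod hal ha j).symm⟩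
  · rintro ⟨j, _, rfl⟩
    exact ⟨j, rfl⟩

lemma mults_injOn {n a l : ℕ} (hn : 0 < n) (hal : a * l = n) :
    Set.InjOn (fun j : ℕ => ((l * j : ℕ) : ZMod n)) (Set.Iio a) := by
  have hl : 0 < l := by by_contra h; push_neg at h; interval_cases l <;> omega
  intro j1 h1 j2 h2 he
  simp only at he
  have h1' : j1 < a := h1
  have h2' : j2 < a := h2
  have hv1 : l * j1 < n := by nlinarith
  have hv2 : l * j2 < n := by nlinarith
  have hval := congrArg ZMod.val he
  rw [ZMod.val_cast_of_lt hv1, ZMod.val_cast_of_lt hv2] at hval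
  exact Nat.eq_of_mul_eq_mul_left hl hval

lemma mults_ncard {n a l : ℕ} (hn : 0 < n) (hal : a * l = n) : (Mults n l).ncard = a := by
  rw [mults_eq_image hn hal, Set.ncard_image_of_injOn (mults_injOn hn hal)]
  have : (Set.Iio a) = ↑(Finset.range a) := by ext; simp
  rw [this, Set.ncard_coe_finset, Finset.card_range]

lemma mults_finite {n a l : ℕ} (hn : 0 < n) (hal : a * l = n) : (Mults n l).Finite := by
  rw [mults_eq_image hn hal]
  exact (Set.finite_Iio a).image _

lemma closed_set_eq_mults {n a l : ℕ} (hn : 0 < n) (hal : a * l = n)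
    (S : Set (ZMod n)) (h0 : (0 : ZMod n) ∈ S)
    (hadd : ∀ x ∈ S, ∀ y ∈ S, x + y ∈ S) (hneg : ∀ x ∈ S, -x ∈ S)
    (hcard : S.ncard = a) : S = Mults n l := by
  haveI : NeZero n := ⟨hn.ne'⟩
  have ha : 0 < a := by by_contra h; push_neg at h; interval_cases a <;> omega
  set H : AddSubgroup (ZMod n) :=
    { carrier := S
      zero_mem' := h0
      add_mem' := fun hx hy => hadd _ hx _ hy
      neg_mem' := fun hx => hneg _ hx } with hH
  have hsub : S ⊆ Mults n l := by
    intro x hx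
    have hdvd : addOrderOf x ∣ a := by
      have h1 : addOrderOf x ∣ Nat.card H := AddSubgroup.addOrderOf_dvd_natCard H hx
      have h2 : Nat.card H = a := by
        have := Nat.card_coe_set_eq S
        rw [hcard] at this
        exact this
      rwa [h2] at h1
    have hsm : a • x = 0 := addOrderOf_dvd_iff_nsmul_eq_zero.mp hdvd
    have hx0 : ((a * x.val : ℕ) : ZMod n) = 0 := by
      push_cast
      rw [ZMod.natCast_zmod_val]
      rw [← nsmul_eq_mul]
      exact hsm
    have hdvd2 : n ∣ a * x.val := (ZMod.natCast_eq_zero_iff _ _).mp hx0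
    have hdvd3 : a * l ∣ a * x.val := by rw [hal]; exact hdvd2
    have hldvd : l ∣ x.val := (Nat.mul_dvd_mul_iff_left ha).mp hdvd3
    obtain ⟨j, hj⟩ := hldvd
    exact ⟨j, by rw [← hj, ZMod.natCast_zmod_val]⟩
  apply Set.eq_of_subset_of_ncard_le hsub _ (mults_finite hn hal)
  rw [mults_ncard hn hal, hcard]

lemma mults_mono {n l j : ℕ} : ((2 * l * j : ℕ) : ZMod n) ∈ Mults n l :=
  ⟨2 * j, by push_cast; ring⟩

/-- The key arithmetic lemma: a subset of `ZMod n` of size `a` containing `0`,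
closed under negation, translation-stable under its even elements and under
differences of its odd elements, is the set of multiples of `l = n / a`. -/
lemma I_structure {n a l : ℕ} (hn : 0 < n) (hal : a * l = n) (hnev : 2 ∣ n)
    (I : Set (ZMod n)) (h0 : (0 : ZMod n) ∈ I) (hcard : I.ncard = a)
    (hneg : ∀ x ∈ I, -x ∈ I)
    (heven : ∀ x ∈ I, Even x.val → ∀ m, m + x ∈ I ↔ m ∈ I)
    (hodd : ∀ x ∈ I, ∀ y ∈ I, Odd x.val → Odd y.val → ∀ m, m + (x - y) ∈ I ↔ m ∈ I) :
    I = Mults n l := by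
  haveI : NeZero n := ⟨hn.ne'⟩
  set D := {t : ZMod n | ∀ m, m + t ∈ I ↔ m ∈ I} with hDdef
  have hD0 : (0 : ZMod n) ∈ D := fun m => by rw [add_zero]
  have hDadd : ∀ x ∈ D, ∀ y ∈ D, x + y ∈ D := by
    intro x hx y hy m
    rw [← add_assoc, hy (m + x), hx m]
  have hDneg : ∀ x ∈ D, -x ∈ D := by
    intro x hx m
    have := hx (m + -x)
    rw [add_assoc, neg_add_cancel, add_zero] at this
    exact this.symm
  have hDsubI : D ⊆ I := by
    intro t ht
    have h := ht 0
    rw [zero_add] at h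
    exact h.mpr h0
  by_cases hex : ∃ k ∈ I, Odd k.val
  · obtain ⟨k, hkI, hkodd⟩ := hex
    have hIsplit : ∀ x ∈ I, x ∈ D ∨ x - k ∈ D := by
      intro x hx
      rcases Nat.even_or_odd x.val with he | ho
      · exact Or.inl (fun m => heven x hx he m)
      · exact Or.inr (fun m => hodd x hx k hkI ho hkodd m)
    by_cases hkD : k ∈ D
    · have hID : I = D := by
        apply Set.Subset.antisymm _ hDsubI
        intro x hx
        rcases hIsplit x hx with h | h
        · exact h
        · have := hDadd _ h _ hkD
          rwa [sub_add_cancel] at this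
      rw [hID] at hcard ⊢
      exact closed_set_eq_mults hn hal D hD0 hDadd hDneg hcard
    · -- the two-coset case
      have hk0 : k ≠ 0 := by
        intro h
        rw [h, ZMod.val_zero] at hkodd
        exact (Nat.not_odd_iff_even.mpr Even.zero) hkodd
      have hknegodd : Odd (-k).val := by
        have hv : (-k).val = n - k.val := by rw [ZMod.neg_val]; simp [hk0]
        obtain ⟨t, ht⟩ := hkodd
        obtain ⟨u, hu⟩ := hnev
        have hlt : k.val < n := ZMod.val_lt k
        rw [hv]
        exact ⟨u - t - 1, by omega⟩
      have hIsplit2 : I = D ∪ (fun t => k + t) '' D := by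
        apply Set.Subset.antisymm
        · intro x hx
          rcases hIsplit x hx with h | h
          · exact Or.inl h
          · exact Or.inr ⟨x - k, h, by ring⟩
        · rintro x (hx | ⟨t, ht, rfl⟩)
          · exact hDsubI hx
          · exact (ht k).mpr hkI
      have hdisj : Disjoint D ((fun t => k + t) '' D) := by
        rw [Set.disjoint_left]
        rintro t ht ⟨t', ht', hteq⟩
        apply hkD
        have : k = t + -t' := by rw [← hteq]; ring
        rw [this]
        exact hDadd _ ht _ (hDneg _ ht')
      have hcard2 : a = D.ncard + D.ncard := by
        rw [← hcard, hIsplit2, Set.ncard_union_eq hdisj (Set.toFinite _) (Set.toFinite _),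
          Set.ncard_image_of_injective _ (add_right_injective k)]
      set b := D.ncard with hb
      have hblk : b * (2 * l) = n := by
        have h2b : 2 * b = a := by omega
        rw [show b * (2 * l) = (2 * b) * l by ring, h2b, hal]
      have hDeq : D = Mults n (2 * l) := closed_set_eq_mults hn hblk D hD0 hDadd hDneg rfl
      have h2k : -k - k ∈ D := fun m => hodd (-k) (hneg k hkI) k hkI hknegodd hkodd m
      have h2k' : k + k ∈ D := by
        have := hDneg _ h2k
        rwa [show -(-k - k) = k + k by ring] at this
      rw [hDeq] at h2k'
      obtain ⟨j, hj⟩ := h2k'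
      have hcast : ((k.val + k.val : ℕ) : ZMod n) = ((2 * l * j : ℕ) : ZMod n) := by
        push_cast
        rw [ZMod.natCast_zmod_val, hj]
        push_cast
        ring
      have hmod := (ZMod.natCast_eq_natCast_iff _ _ _).mp hcast
      have hdvdZ : (n : ℤ) ∣ (2 * l * j : ℕ) - ((k.val + k.val : ℕ) : ℤ) := hmod.dvd
      have hben : ((2 : ℤ) * (b * l)) ∣ 2 * ((l : ℤ) * j - k.val) := by
        have hnz : (n : ℤ) = 2 * (b * l) := by
          rw [show ((n : ℤ)) = ((b * (2 * l) : ℕ) : ℤ) by rw [hblk]]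
          push_cast
          ring
        rw [← hnz]
        convert hdvdZ using 1
        push_cast
        ring
      have hbl : ((b : ℤ) * l) ∣ ((l : ℤ) * j - k.val) :=
        (mul_dvd_mul_iff_left (two_ne_zero (α := ℤ))).mp hben
      obtain ⟨t, ht⟩ := hbl
      have hlk : (l : ℤ) ∣ (k.val : ℤ) := ⟨j - b * t, by linear_combination -ht⟩
      have hlkn : l ∣ k.val := Int.ofNat_dvd.mp (by exact_mod_cast hlk)
      obtain ⟨j1, hj1⟩ := hlkn
      have hkM : k = ((l * j1 : ℕ) : ZMod n) := by rw [← hj1, ZMod.natCast_zmod_val]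
      have hsub : I ⊆ Mults n l := by
        intro x hx
        rw [hIsplit2] at hx
        rcases hx with hx | ⟨t', ht', rfl⟩
        · rw [hDeq] at hx
          obtain ⟨j2, rfl⟩ := hx
          exact mults_mono
        · rw [hDeq] at ht'
          obtain ⟨j2, rfl⟩ := ht'
          refine ⟨j1 + 2 * j2, ?_⟩
          rw [hkM]
          push_cast
          ring
      apply Set.eq_of_subset_of_ncard_le hsub _ (mults_finite hn hal)
      rw [mults_ncard hn hal, hcard]
  · push_neg at hex
    have hID : I = D := by
      apply Set.Subset.antisymm _ hDsubI
      intro x hx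
      have he : Even x.val := Nat.not_odd_iff_even.mp (hex x hx)
      exact fun m => heven x hx he m
    rw [hID] at hcard ⊢
    exact closed_set_eq_mults hn hal D hD0 hDadd hDneg hcard

end ZModArith

lemma att_shift (S : Setup V) (c : AltCycle S.Γ S.O (2 * S.r)) :
    ∀ (d : ℕ) (k m : ZMod (2 * S.r)),
      c.f (m + ((2 * d : ℕ) : ZMod (2 * S.r))) ∈ AttOf S (c.f (k + ((2 * d : ℕ) : ZMod (2 * S.r))))
        ↔ c.f m ∈ AttOf S (c.f k) := by
  obtain ⟨g, hg, hrot⟩ := exists_rot2 S c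
  have hstep : ∀ k m : ZMod (2 * S.r),
      c.f (m + 2) ∈ AttOf S (c.f (k + 2)) ↔ c.f m ∈ AttOf S (c.f k) := by
    intro k m
    have h1 := mem_attOf_map S hg (c.f k) (c.f m)
    rw [hrot m, hrot k] at h1
    exact h1
  intro d
  induction d with
  | zero =>
    intro k m
    simp only [Nat.mul_zero, Nat.cast_zero, add_zero]
  | succ d ih =>
    intro k m
    have hc : ((2 * (d + 1) : ℕ) : ZMod (2 * S.r)) = ((2 * d : ℕ) : ZMod (2 * S.r)) + 2 := by
      push_cast; ring
    rw [hc, ← add_assoc, ← add_assoc, hstep, ih]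

lemma attOf_cycle_zero (S : Setup V) {l : ℕ} (hl : S.att * l = 2 * S.r)
    (c : AltCycle S.Γ S.O (2 * S.r)) :
    AttOf S (c.f 0) = c.f '' Mults (2 * S.r) l := by
  haveI := nezero_n S
  have hn : 0 < 2 * S.r := by have := S.r_pos; omega
  set A := AttOf S (c.f 0) with hA
  have hCmem : cycEdges c ∈ CyclesThru S (c.f 0) :=
    ⟨⟨c, rfl⟩, by rw [supp_cycEdges]; exact mem_cycVerts c 0⟩
  have hArange : A ⊆ Set.range c.f := by
    intro w hw
    have := attOf_subset S hCmem hw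
    rwa [supp_cycEdges] at this
  set I := c.f ⁻¹' A with hI
  have himg : c.f '' I = A := Set.image_preimage_eq_of_subset hArange
  have hIcard : I.ncard = S.att := by
    have h1 := Set.ncard_image_of_injective I c.inj
    rw [himg, hA, attOf_ncard] at h1
    exact h1.symm
  have h0I : (0 : ZMod (2 * S.r)) ∈ I := mem_attOf_self S (c.f 0)
  obtain ⟨h, hhG, hrefl⟩ := exists_refl S c
  have hneg : ∀ x ∈ I, -x ∈ I := by
    intro x hx
    have h1 := mem_attOf_map S hhG (c.f 0) (c.f x)
    rw [hrefl x, hrefl 0, neg_zero] at h1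
    exact h1.mpr hx
  have heven : ∀ x ∈ I, Even x.val → ∀ m, m + x ∈ I ↔ m ∈ I := by
    intro x hx hev m
    have hAx : AttOf S (c.f x) = A := attOf_eq_of_mem S hx
    obtain ⟨d, hd⟩ := hev
    have hxd : x = ((2 * d : ℕ) : ZMod (2 * S.r)) := by
      rw [show 2 * d = x.val by omega, ZMod.natCast_zmod_val]
    have hsh := att_shift S c d 0 m
    rw [zero_add, ← hxd, hAx] at hsh
    exact hsh
  have hodd : ∀ x ∈ I, ∀ y ∈ I, Odd x.val → Odd y.val →
      ∀ m, m + (x - y) ∈ I ↔ m ∈ I := by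
    intro x hx y hy hox hoy m
    have hAx : AttOf S (c.f x) = A := attOf_eq_of_mem S hx
    have hAy : AttOf S (c.f y) = A := attOf_eq_of_mem S hy
    obtain ⟨d, hd⟩ := hox
    obtain ⟨e, he⟩ := hoy
    have hxd : x = ((2 * d : ℕ) : ZMod (2 * S.r)) + 1 := by
      have : x = ((2 * d + 1 : ℕ) : ZMod (2 * S.r)) := by
        rw [show 2 * d + 1 = x.val by omega, ZMod.natCast_zmod_val]
      rw [this]; push_cast; ring
    have hyd : y = ((2 * e : ℕ) : ZMod (2 * S.r)) + 1 := by
      have : y = ((2 * e + 1 : ℕ) : ZMod (2 * S.r)) := by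
        rw [show 2 * e + 1 = y.val by omega, ZMod.natCast_zmod_val]
      rw [this]; push_cast; ring
    have keyx : ∀ m' : ZMod (2 * S.r),
        c.f (m' + ((2 * d : ℕ) : ZMod (2 * S.r))) ∈ A ↔ c.f m' ∈ AttOf S (c.f 1) := by
      intro m'
      have hsh := att_shift S c d 1 m'
      rw [show (1 : ZMod (2 * S.r)) + ((2 * d : ℕ) : ZMod (2 * S.r)) = x by rw [hxd]; ring,
        hAx] at hsh
      exact hsh
    have keyy : ∀ m' : ZMod (2 * S.r),
        c.f (m' + ((2 * e : ℕ) : ZMod (2 * S.r))) ∈ A ↔ c.f m' ∈ AttOf S (c.f 1) := by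
      intro m'
      have hsh := att_shift S c e 1 m'
      rw [show (1 : ZMod (2 * S.r)) + ((2 * e : ℕ) : ZMod (2 * S.r)) = y by rw [hyd]; ring,
        hAy] at hsh
      exact hsh
    set m' := m - ((2 * e : ℕ) : ZMod (2 * S.r)) with hm'
    have e1 : m' + ((2 * d : ℕ) : ZMod (2 * S.r)) = m + (x - y) := by
      rw [hm', hxd, hyd]; ring
    have e2 : m' + ((2 * e : ℕ) : ZMod (2 * S.r)) = m := by rw [hm']; ring
    have hfin := (keyx m').trans (keyy m').symm
    rw [e1, e2] at hfin
    exact hfin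
  have hImults := I_structure hn hl ⟨S.r, rfl⟩ I h0I hIcard hneg heven hodd
  rw [← himg, hImults]

/-- Shift of an alternating cycle. -/
def shiftCycle {V : Type*} {S : Setup V} (c : AltCycle S.Γ S.O (2 * S.r))
    (i : ZMod (2 * S.r)) : AltCycle S.Γ S.O (2 * S.r) where
  f := fun m => c.f (i + m)
  inj := fun a b hab => add_left_cancel (c.inj hab)
  adj := fun m => by have := c.adj (i + m); rwa [add_assoc] at this
  alt := fun m => by
    have := c.alt (i + m)
    rwa [add_assoc, add_assoc] at this

lemma attOf_cycle (S : Setup V) {l : ℕ} (hl : S.att * l = 2 * S.r)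
    (c : AltCycle S.Γ S.O (2 * S.r)) (i : ZMod (2 * S.r)) :
    AttOf S (c.f i) = {w | ∃ j : ℕ, w = c.f (i + ((l * j : ℕ) : ZMod (2 * S.r)))} := by
  have h0 : (shiftCycle c i).f 0 = c.f i := by
    show c.f (i + 0) = c.f i
    rw [add_zero]
  have := attOf_cycle_zero S hl (shiftCycle c i)
  rw [h0] at this
  rw [this]
  ext w
  constructor
  · rintro ⟨x, ⟨j, rfl⟩, rfl⟩
    exact ⟨j, rfl⟩
  · rintro ⟨j, rfl⟩
    exact ⟨((l * j : ℕ) : ZMod (2 * S.r)), ⟨j, rfl⟩, rfl⟩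

lemma mults2_mod {n a l : ℕ} (hal : a * l = n) (ha : 0 < a) (j : ℕ) :
    ((2 * l * j : ℕ) : ZMod n) = ((2 * l * (j % a) : ℕ) : ZMod n) := by
  conv_lhs => rw [show j = a * (j / a) + j % a from (Nat.div_add_mod j a).symm]
  have he : 2 * l * (a * (j / a) + j % a) = n * (2 * (j / a)) + 2 * l * (j % a) := by
    rw [← hal]; ring
  rw [he]
  push_cast
  rw [ZMod.natCast_self]
  ring

lemma blockSet_even (S : Setup V) {l s : ℕ} (hl : S.att * l = 2 * S.r) (h2s : 2 * s = l)
    (c : AltCycle S.Γ S.O (2 * S.r)) (i : ZMod (2 * S.r)) :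
    S.blockSet s c i = AttOf S (c.f i) := by
  rw [attOf_cycle S hl c i]
  ext w
  constructor
  · rintro ⟨j, hj, rfl⟩
    exact ⟨j, by rw [show 2 * s * j = l * j by rw [← h2s]]⟩
  · rintro ⟨j, rfl⟩
    refine ⟨j % S.att, Nat.mod_lt _ S.att_pos, ?_⟩
    have hm := mults_mod hl S.att_pos j
    refine congrArg c.f ?_
    rw [show 2 * s * (j % S.att) = l * (j % S.att) by rw [← h2s], hm]

lemma blockSet_odd (S : Setup V) {l : ℕ} (hl : S.att * l = 2 * S.r) (hlo : Odd l)
    (c : AltCycle S.Γ S.O (2 * S.r)) (i : ZMod (2 * S.r)) :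
    S.blockSet l c i = {w | w ∈ AttOf S (c.f i) ∧
      (TailOn S (cycEdges c) w ↔ TailOn S (cycEdges c) (c.f i))} := by
  ext w
  constructor
  · rintro ⟨j, hj, rfl⟩
    constructor
    · rw [attOf_cycle S hl c i]
      exact ⟨2 * j, by rw [show l * (2 * j) = 2 * l * j by ring]⟩
    · have t1 := tailOn_iff S c (i + ((2 * l * j : ℕ) : ZMod (2 * S.r)))
      have t2 := tOf_add_nat S c i (2 * l * j)
      have t3 := tailOn_iff S c i
      have hev : Even (2 * l * j) := ⟨l * j, by ring⟩
      tauto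
  · rintro ⟨hwA, hwT⟩
    rw [attOf_cycle S hl c i] at hwA
    obtain ⟨j, rfl⟩ := hwA
    have t1 := tailOn_iff S c (i + ((l * j : ℕ) : ZMod (2 * S.r)))
    have t2 := tOf_add_nat S c i (l * j)
    have t3 := tailOn_iff S c i
    have hevlj : Even (l * j) := by
      by_cases hti : tOf S c i <;> tauto
    have hevj : Even j := by
      rcases Nat.even_mul.mp hevlj with h | h
      · exact absurd h (Nat.not_even_iff_odd.mpr hlo)
      · exact h
    obtain ⟨j', hj'⟩ := hevj
    refine ⟨j' % S.att, Nat.mod_lt _ S.att_pos, ?_⟩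
    have h1 : ((l * j : ℕ) : ZMod (2 * S.r)) = ((2 * l * j' : ℕ) : ZMod (2 * S.r)) := by
      rw [show l * j = 2 * l * j' by rw [hj']; ring]
    have h2 := mults2_mod hl S.att_pos j'
    exact congrArg c.f (by rw [h1, h2])

end SetupLemmas

end HalfArc


open HalfArc


/-- the set `B_s(C; u)` of Construction 5.3 is a block of
imprimitivity for the action of `G` on the vertex set of `Γ`. -/
theorem statement_9 {V : Type*} (S : Setup V) (l s : ℕ) (hl : S.att * l = 2 * S.r)
    (hs : s = if Even l then l / 2 else l)
    (c : AltCycle S.Γ S.O (2 * S.r)) (i : ZMod (2 * S.r)) :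
    ∀ g ∈ S.G, (g : V → V) '' S.blockSet s c i = S.blockSet s c i ∨
      Disjoint ((g : V → V) '' S.blockSet s c i) (S.blockSet s c i) := by
  intro g hg
  set v := c.f i with hv
  by_cases hle : Even l
  · -- even case: the block is an attachment set
    have hsv : s = l / 2 := by rw [hs, if_pos hle]
    have h2s : 2 * s = l := by
      rw [Nat.even_iff] at hle
      omega
    have hBA : S.blockSet s c i = AttOf S v := blockSet_even S hl h2s c i
    rw [hBA, attOf_map S hg v]
    by_cases hAA : AttOf S (g v) = AttOf S v
    · left; exact hAA
    · right
      rw [Set.disjoint_left]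
      intro x hx1 hx2
      apply hAA
      have h1 := attOf_eq_of_mem S hx1
      have h2 := attOf_eq_of_mem S hx2
      rw [← h1, h2]
  · -- odd case
    have hlo : Odd l := Nat.not_even_iff_odd.mp hle
    have hsl : s = l := by rw [hs, if_neg hle]
    subst hsl
    have hBA : S.blockSet s c i = {w | w ∈ AttOf S v ∧
        (TailOn S (cycEdges c) w ↔ TailOn S (cycEdges c) v)} := blockSet_odd S hl hlo c i
    have hBsubA : S.blockSet s c i ⊆ AttOf S v := by
      rw [hBA]; exact fun w hw => hw.1
    by_cases hAA : AttOf S (g v) = AttOf S v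
    · -- the image stays in the same attachment set
      have hgvA : g v ∈ AttOf S v := by rw [← hAA]; exact mem_attOf_self S (g v)
      have hCT : CyclesThru S (g v) = CyclesThru S v := cyclesThru_eq_of_mem S hgvA
      have hCmem : cycEdges c ∈ CyclesThru S v :=
        ⟨⟨c, rfl⟩, by rw [supp_cycEdges, hv]; exact mem_cycVerts c i⟩
      set C' : Set (Sym2 V) := Sym2.map (g : V → V) '' cycEdges c with hC'
      have hC'mem : C' ∈ CyclesThru S v := by
        rw [← hCT]
        exact cyclesThru_map S hg v hCmem
      -- compute the image of the block
      have himg : (g : V → V) '' S.blockSet s c i =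
          {w | w ∈ AttOf S v ∧ (TailOn S C' w ↔ TailOn S C' (g v))} := by
        rw [hBA]
        ext x
        constructor
        · rintro ⟨w, ⟨hwA, hwT⟩, rfl⟩
          constructor
          · rw [← hAA]
            exact (mem_attOf_map S hg v w).mpr hwA
          · have e1 := tailOn_map S hg (cycEdges c) w
            have e2 := tailOn_map S hg (cycEdges c) v
            rw [← hC'] at e1 e2
            tauto
        · rintro ⟨hxA, hxT⟩
          refine ⟨(g⁻¹ : S.Γ ≃g S.Γ) x, ⟨?_, ?_⟩, g.toEquiv.apply_symm_apply x⟩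
          · have hgx : g ((g⁻¹ : S.Γ ≃g S.Γ) x) = x := g.toEquiv.apply_symm_apply x
            have := (mem_attOf_map S hg v ((g⁻¹ : S.Γ ≃g S.Γ) x))
            rw [hgx, hAA] at this
            exact this.mp hxA
          · have hgx : g ((g⁻¹ : S.Γ ≃g S.Γ) x) = x := g.toEquiv.apply_symm_apply x
            have e1 := tailOn_map S hg (cycEdges c) ((g⁻¹ : S.Γ ≃g S.Γ) x)
            have e2 := tailOn_map S hg (cycEdges c) v
            rw [← hC'] at e1 e2
            rw [hgx] at e1
            tauto
      by_cases hcc : C' = cycEdges c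
      · -- image block determined by TailOn on C
        have himg2 : (g : V → V) '' S.blockSet s c i =
            {w | w ∈ AttOf S v ∧ (TailOn S (cycEdges c) w ↔ TailOn S (cycEdges c) (g v))} := by
          rw [himg, hcc]
        by_cases hT : TailOn S (cycEdges c) (g v) ↔ TailOn S (cycEdges c) v
        · left
          rw [himg2, hBA]
          ext w
          simp only [Set.mem_setOf_eq]
          constructor
          · rintro ⟨h1, h2⟩; exact ⟨h1, h2.trans hT⟩
          · rintro ⟨h1, h2⟩; exact ⟨h1, h2.trans hT.symm⟩
        · right
          rw [Set.disjoint_left]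
          intro x hx1 hx2
          rw [himg2] at hx1
          rw [hBA] at hx2
          simp only [Set.mem_setOf_eq] at hx1 hx2
          exact hT (hx1.2.symm.trans hx2.2)
      · -- the two cycles through the attachment set are swapped
        have h1gv : cycEdges c ∈ CyclesThru S (g v) := by rw [hCT]; exact hCmem
        have h2gv : C' ∈ CyclesThru S (g v) := by rw [hCT]; exact hC'mem
        have hxgv := tailOn_xor S hcc h2gv h1gv
        have himg2 : (g : V → V) '' S.blockSet s c i =
            {w | w ∈ AttOf S v ∧ (TailOn S (cycEdges c) w ↔ TailOn S (cycEdges c) (g v))} := by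
          rw [himg]
          ext w
          simp only [Set.mem_setOf_eq]
          constructor
          · rintro ⟨hwA, hwT⟩
            refine ⟨hwA, ?_⟩
            have hCTw : CyclesThru S w = CyclesThru S v := cyclesThru_eq_of_mem S hwA
            have h1w : cycEdges c ∈ CyclesThru S w := by rw [hCTw]; exact hCmem
            have h2w : C' ∈ CyclesThru S w := by rw [hCTw]; exact hC'mem
            have hxw := tailOn_xor S hcc h2w h1w
            by_cases hw1 : TailOn S (cycEdges c) w <;>
              by_cases hv1 : TailOn S (cycEdges c) (g v)
            · exact iff_of_true hw1 hv1
            · exact absurd hw1 (hxw.mp (hwT.mpr (hxgv.mpr hv1)))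
            · exact absurd hv1 (hxgv.mp (hwT.mp (hxw.mpr hw1)))
            · exact iff_of_false hw1 hv1
          · rintro ⟨hwA, hwT⟩
            refine ⟨hwA, ?_⟩
            have hCTw : CyclesThru S w = CyclesThru S v := cyclesThru_eq_of_mem S hwA
            have h1w : cycEdges c ∈ CyclesThru S w := by rw [hCTw]; exact hCmem
            have h2w : C' ∈ CyclesThru S w := by rw [hCTw]; exact hC'mem
            have hxw := tailOn_xor S hcc h2w h1w
            by_cases hw1 : TailOn S (cycEdges c) w <;>
              by_cases hv1 : TailOn S (cycEdges c) (g v)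
            · exact iff_of_false (fun h => (hxw.mp h) hw1) (fun h => (hxgv.mp h) hv1)
            · exact absurd (hwT.mp hw1) hv1
            · exact absurd (hwT.mpr hv1) hw1
            · exact iff_of_true (hxw.mpr hw1) (hxgv.mpr hv1)
        by_cases hT : TailOn S (cycEdges c) (g v) ↔ TailOn S (cycEdges c) v
        · left
          rw [himg2, hBA]
          ext w
          simp only [Set.mem_setOf_eq]
          constructor
          · rintro ⟨h1, h2⟩; exact ⟨h1, h2.trans hT⟩
          · rintro ⟨h1, h2⟩; exact ⟨h1, h2.trans hT.symm⟩
        · right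
          rw [Set.disjoint_left]
          intro x hx1 hx2
          rw [himg2] at hx1
          rw [hBA] at hx2
          simp only [Set.mem_setOf_eq] at hx1 hx2
          exact hT (hx1.2.symm.trans hx2.2)
    · -- different attachment sets: disjoint
      right
      rw [Set.disjoint_left]
      intro x hx1 hx2
      apply hAA
      obtain ⟨w, hw, rfl⟩ := hx1
      have hwA : w ∈ AttOf S v := hBsubA hw
      have h1 : g w ∈ AttOf S (g v) := (mem_attOf_map S hg v w).mpr hwA
      have h2 : g w ∈ AttOf S v := hBsubA hx2
      have e1 := attOf_eq_of_mem S h1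
      have e2 := attOf_eq_of_mem S h2
      rw [← e1, e2]
end
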